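/- arXiv:1812.03737 — 5 statements merged into one kernel-verified Lean document; each statement's English description precedes it below -/
import Mathlib

section
/- Let Π be an N-gon with N = (d+1)n + d - 1 vertices, where d ≥ 1 and n > 0. Then every maximal d-Brauer relation on Π (a maximal set of pairwise disjoint d-diagonals) contains exactly n diagonals. -/
namespace BrauerComb

/-- `x` lies strictly between `a` and `b` in clockwise order on the `N`-gon,
where vertices are numbered clockwise by `ZMod N`. -/
def Between {N : ℕ} (a b x : ZMod N) : Prop :=
  0 < (x - a).val ∧ (x - a).val < (b - a).val

/-- Two chords of the `N`-gon cross in the interior. -/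
def Crosses {N : ℕ} (X Y : Sym2 (ZMod N)) : Prop :=
  ∃ a b c e : ZMod N, X = s(a, b) ∧ Y = s(c, e) ∧ Xor' (Between a b c) (Between a b e)

/-- Two chords are disjoint: they share no vertex and do not cross. -/
def DisjointDiag {N : ℕ} (X Y : Sym2 (ZMod N)) : Prop :=
  (∀ v : ZMod N, ¬ (v ∈ X ∧ v ∈ Y)) ∧ ¬ Crosses X Y

/-- A `d`-diagonal of the `N`-gon: a diagonal of the form `(i, i + d + j*(d+1))`
with `0 ≤ j ≤ n - 1`. -/
def IsDDiag {N : ℕ} (d n : ℕ) (X : Sym2 (ZMod N)) : Prop :=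
  ∃ (i : ZMod N) (j : ℕ), j ≤ n - 1 ∧ X = s(i, i + ((d + (d + 1) * j : ℕ) : ZMod N))

/-- A `d`-Brauer relation: a set of pairwise disjoint `d`-diagonals. -/
def IsBrauer {N : ℕ} (d n : ℕ) (B : Set (Sym2 (ZMod N))) : Prop :=
  (∀ X ∈ B, IsDDiag d n X) ∧ ∀ X ∈ B, ∀ Y ∈ B, X ≠ Y → DisjointDiag X Y

/-- A maximal `d`-Brauer relation. -/
def IsMaxBrauer {N : ℕ} (d n : ℕ) (B : Set (Sym2 (ZMod N))) : Prop :=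
  IsBrauer d n B ∧ ∀ B' : Set (Sym2 (ZMod N)), IsBrauer d n B' → B ⊆ B' → B' = B

end BrauerComb

namespace BrauerComb

namespace Pure

def PValid (d lo hi : ℕ) (c : ℕ × ℕ) : Prop :=
  lo ≤ c.1 ∧ c.1 < c.2 ∧ c.2 ≤ hi ∧ (d + 1) ∣ (c.2 - c.1 + 1)

def PCompat (c c' : ℕ × ℕ) : Prop :=
  c.2 < c'.1 ∨ c'.2 < c.1 ∨ (c.1 < c'.1 ∧ c'.2 < c.2) ∨ (c'.1 < c.1 ∧ c.2 < c'.2)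

def PFam (d lo hi : ℕ) (C : Set (ℕ × ℕ)) : Prop :=
  (∀ c ∈ C, PValid d lo hi c) ∧ ∀ c ∈ C, ∀ c' ∈ C, c ≠ c' → PCompat c c'

def PCov (C : Set (ℕ × ℕ)) (p : ℕ) : Prop := ∃ X ∈ C, X.1 ≤ p ∧ p ≤ X.2

def PFree (lo hi : ℕ) (C : Set (ℕ × ℕ)) : Set ℕ := {p | lo ≤ p ∧ p ≤ hi ∧ ¬ PCov C p}

lemma PCompat.symm {c c' : ℕ × ℕ} (h : PCompat c c') : PCompat c' c := by
  unfold PCompat at *; tauto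

lemma pfam_finite {d lo hi : ℕ} {C : Set (ℕ × ℕ)} (h : PFam d lo hi C) : C.Finite := by
  apply Set.Finite.subset ((Set.finite_Icc lo hi).prod (Set.finite_Icc lo hi))
  intro c hc
  obtain ⟨h1, h2, h3, _⟩ := h.1 c hc
  exact ⟨Set.mem_Icc.2 ⟨h1, by omega⟩, Set.mem_Icc.2 ⟨by omega, h3⟩⟩

lemma pfree_finite (lo hi : ℕ) (C : Set (ℕ × ℕ)) : (PFree lo hi C).Finite := by
  apply Set.Finite.subset (Set.finite_Icc lo hi)
  intro p hp; exact Set.mem_Icc.2 ⟨hp.1, hp.2.1⟩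

lemma pfree_empty (lo hi : ℕ) : PFree lo hi (∅ : Set (ℕ × ℕ)) = Set.Icc lo hi := by
  ext p; simp [PFree, PCov]

lemma exists_leftmost {d lo hi : ℕ} {C : Set (ℕ × ℕ)} (h : PFam d lo hi C) (hne : C.Nonempty) :
    ∃ X ∈ C, ∀ Y ∈ C, Y ≠ X → (X.1 < Y.1 ∧ Y.2 < X.2) ∨ X.2 < Y.1 := by
  obtain ⟨X, hX, hmin⟩ := Set.exists_min_image C (fun c => c.1) (pfam_finite h) hne
  refine ⟨X, hX, fun Y hY hne' => ?_⟩
  have h1 := hmin Y hY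
  have hc := h.2 X hX Y hY (Ne.symm hne')
  have hvX := h.1 X hX; have hvY := h.1 Y hY
  unfold PCompat at hc; unfold PValid at hvX hvY
  omega

lemma decomp {C : Set (ℕ × ℕ)} {X : ℕ × ℕ} (hX : X ∈ C)
    (hleft : ∀ Y ∈ C, Y ≠ X → (X.1 < Y.1 ∧ Y.2 < X.2) ∨ X.2 < Y.1) :
    C = insert X ({Y ∈ C | X.1 < Y.1 ∧ Y.2 < X.2} ∪ {Y ∈ C | X.2 < Y.1}) := by
  ext Y
  simp only [Set.mem_insert_iff, Set.mem_union, Set.mem_setOf_eq]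
  constructor
  · intro hY
    by_cases hYX : Y = X
    · exact Or.inl hYX
    · rcases hleft Y hY hYX with h' | h'
      · exact Or.inr (Or.inl ⟨hY, h'⟩)
      · exact Or.inr (Or.inr ⟨hY, h'⟩)
  · rintro (rfl | ⟨hY, _⟩ | ⟨hY, _⟩) <;> assumption

lemma decomp_ncard {d lo hi : ℕ} {C : Set (ℕ × ℕ)} (h : PFam d lo hi C) {X : ℕ × ℕ} (hX : X ∈ C)
    (hleft : ∀ Y ∈ C, Y ≠ X → (X.1 < Y.1 ∧ Y.2 < X.2) ∨ X.2 < Y.1) :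
    C.ncard = 1 + {Y ∈ C | X.1 < Y.1 ∧ Y.2 < X.2}.ncard + {Y ∈ C | X.2 < Y.1}.ncard := by
  have hfin := pfam_finite h
  obtain ⟨hv1, hv2, hv3, hv4⟩ := h.1 X hX
  have hfin1 : {Y ∈ C | X.1 < Y.1 ∧ Y.2 < X.2}.Finite := hfin.subset (fun Y hY => hY.1)
  have hfin2 : {Y ∈ C | X.2 < Y.1}.Finite := hfin.subset (fun Y hY => hY.1)
  have hnot : X ∉ {Y ∈ C | X.1 < Y.1 ∧ Y.2 < X.2} ∪ {Y ∈ C | X.2 < Y.1} := by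
    rintro (⟨_, h1, h2⟩ | ⟨_, h1⟩) <;> omega
  have hdisj : Disjoint {Y ∈ C | X.1 < Y.1 ∧ Y.2 < X.2} {Y ∈ C | X.2 < Y.1} := by
    rw [Set.disjoint_left]
    rintro Y ⟨hY, h1, h2⟩ ⟨_, h3⟩
    obtain ⟨_, hv, _, _⟩ := h.1 Y hY
    omega
  conv_lhs => rw [decomp hX hleft]
  rw [Set.ncard_insert_of_notMem hnot (hfin1.union hfin2),
    Set.ncard_union_eq hdisj hfin1 hfin2]
  omega

lemma pfam_inner {d lo hi : ℕ} {C : Set (ℕ × ℕ)} (h : PFam d lo hi C) (X : ℕ × ℕ) :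
    PFam d (X.1 + 1) (X.2 - 1) {Y ∈ C | X.1 < Y.1 ∧ Y.2 < X.2} := by
  constructor
  · rintro Y ⟨hY, h1, h2⟩
    have := h.1 Y hY
    exact ⟨by omega, this.2.1, by omega, this.2.2.2⟩
  · rintro Y ⟨hY, _⟩ Y' ⟨hY', _⟩ hne
    exact h.2 Y hY Y' hY' hne

lemma pfam_right {d lo hi : ℕ} {C : Set (ℕ × ℕ)} (h : PFam d lo hi C) (X : ℕ × ℕ) :
    PFam d (X.2 + 1) hi {Y ∈ C | X.2 < Y.1} := by
  constructor
  · rintro Y ⟨hY, h1⟩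
    have := h.1 Y hY
    exact ⟨by omega, this.2.1, this.2.2.1, this.2.2.2⟩
  · rintro Y ⟨hY, _⟩ Y' ⟨hY', _⟩ hne
    exact h.2 Y hY Y' hY' hne

lemma free_split {d lo hi : ℕ} {C : Set (ℕ × ℕ)} (h : PFam d lo hi C) {X : ℕ × ℕ} (hX : X ∈ C)
    (hleft : ∀ Y ∈ C, Y ≠ X → (X.1 < Y.1 ∧ Y.2 < X.2) ∨ X.2 < Y.1) :
    PFree lo hi C = Set.Ico lo X.1 ∪ PFree (X.2 + 1) hi {Y ∈ C | X.2 < Y.1} := by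
  obtain ⟨hv1, hv2, hv3, hv4⟩ := h.1 X hX
  ext p
  simp only [PFree, Set.mem_union, Set.mem_Ico, Set.mem_setOf_eq]
  constructor
  · rintro ⟨h1, h2, h3⟩
    have hpX : ¬ (X.1 ≤ p ∧ p ≤ X.2) := fun hc => h3 ⟨X, hX, hc⟩
    by_cases hp : p < X.1
    · exact Or.inl ⟨h1, hp⟩
    · refine Or.inr ⟨by omega, h2, fun ⟨Y, ⟨hY, _⟩, hc⟩ => h3 ⟨Y, hY, hc⟩⟩
  · rintro (⟨h1, h2⟩ | ⟨h1, h2, h3⟩)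
    · refine ⟨h1, by omega, ?_⟩
      rintro ⟨Y, hY, hc1, hc2⟩
      by_cases hYX : Y = X
      · subst hYX; omega
      · obtain ⟨_, hw, _, _⟩ := h.1 Y hY
        rcases hleft Y hY hYX with h' | h' <;> omega
    · refine ⟨by omega, h2, ?_⟩
      rintro ⟨Y, hY, hc1, hc2⟩
      by_cases hYX : Y = X
      · subst hYX; omega
      · rcases hleft Y hY hYX with h' | h'
        · omega
        · exact h3 ⟨Y, ⟨hY, h'⟩, hc1, hc2⟩

lemma free_split_ncard {d lo hi : ℕ} {C : Set (ℕ × ℕ)} (h : PFam d lo hi C) {X : ℕ × ℕ}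
    (hX : X ∈ C)
    (hleft : ∀ Y ∈ C, Y ≠ X → (X.1 < Y.1 ∧ Y.2 < X.2) ∨ X.2 < Y.1) :
    (PFree lo hi C).ncard = (X.1 - lo) + (PFree (X.2 + 1) hi {Y ∈ C | X.2 < Y.1}).ncard := by
  rw [free_split h hX hleft]
  obtain ⟨hv1, hv2, hv3, hv4⟩ := h.1 X hX
  rw [Set.ncard_union_eq ?_ (Set.finite_Ico lo X.1) (pfree_finite _ _ _)]
  · rw [← Finset.coe_Ico, Set.ncard_coe_finset, Nat.card_Ico]
  · rw [Set.disjoint_left]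
    rintro p hp hp2
    have h1 := (Set.mem_Ico.1 hp).2
    have h2 := hp2.1
    omega

lemma key (d : ℕ) : ∀ k lo hi : ℕ, ∀ C : Set (ℕ × ℕ), hi + 1 - lo ≤ k → PFam d lo hi C →
    ∃ t, hi + 1 - lo = (PFree lo hi C).ncard + (d + 1) * t ∧ C.ncard ≤ t := by
  intro k
  induction k with
  | zero =>
    intro lo hi C hk h
    refine ⟨0, ?_, ?_⟩
    · have hE : PFree lo hi C = ∅ := by
        ext p; simp only [PFree, Set.mem_setOf_eq, Set.mem_empty_iff_false, iff_false]
        rintro ⟨h1, h2, _⟩; omega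
      rw [hE]; simp; omega
    · have hE : C = ∅ := by
        ext c; simp only [Set.mem_empty_iff_false, iff_false]
        intro hc; have := h.1 c hc; unfold PValid at this; omega
      rw [hE]; simp
  | succ k ih =>
    intro lo hi C hk h
    rcases Set.eq_empty_or_nonempty C with rfl | hne
    · refine ⟨0, ?_, by simp⟩
      rw [pfree_empty, ← Finset.coe_Icc, Set.ncard_coe_finset, Nat.card_Icc]
      omega
    · obtain ⟨X, hX, hleft⟩ := exists_leftmost h hne
      have hvX := h.1 X hX
      obtain ⟨hlo, hXlt, hhi, hdvd⟩ := hvX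
      obtain ⟨m, hm⟩ := hdvd
      obtain ⟨tin, hti1, hti2⟩ := ih (X.1 + 1) (X.2 - 1) _ (by omega) (pfam_inner h X)
      obtain ⟨tr, htr1, htr2⟩ := ih (X.2 + 1) hi _ (by omega) (pfam_right h X)
      refine ⟨m + tr, ?_, ?_⟩
      · rw [free_split_ncard h hX hleft, Nat.mul_add]
        generalize hA : (d + 1) * m = A at hm
        generalize hB : (d + 1) * tr = B at htr1
        omega
      · have h1 : (d + 1) * tin < (d + 1) * m := by
          generalize hA : (d + 1) * m = A at hm
          generalize hB : (d + 1) * tin = B at hti1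
          omega
        have h2 : tin < m := by
          exact lt_of_mul_lt_mul_left h1 (Nat.zero_le _)
        rw [decomp_ncard h hX hleft]
        omega

lemma span (d : ℕ) : ∀ k lo hi : ℕ, ∀ C : Set (ℕ × ℕ), hi + 1 - lo ≤ k → PFam d lo hi C →
    ∀ y ∈ PFree lo hi C, (d + 1) ∣ (Set.Icc lo y ∩ {p | PCov C p}).ncard := by
  intro k
  induction k with
  | zero =>
    intro lo hi C hk h y hy
    exfalso; obtain ⟨h1, h2, _⟩ := hy; omega
  | succ k ih =>
    intro lo hi C hk h y hy
    obtain ⟨hy1, hy2, hy3⟩ := hy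
    rcases Set.eq_empty_or_nonempty C with rfl | hne
    · have : Set.Icc lo y ∩ {p | PCov (∅ : Set (ℕ × ℕ)) p} = ∅ := by
        ext p; simp [PCov]
      rw [this]; simp
    · obtain ⟨X, hX, hleft⟩ := exists_leftmost h hne
      have hvX := h.1 X hX
      obtain ⟨hlo, hXlt, hhi, hdvd⟩ := hvX
      have hyX : ¬ (X.1 ≤ y ∧ y ≤ X.2) := fun hc => hy3 ⟨X, hX, hc⟩
      by_cases hcase : y < X.1
      · have : Set.Icc lo y ∩ {p | PCov C p} = ∅ := by
          ext p
          simp only [Set.mem_inter_iff, Set.mem_Icc, Set.mem_setOf_eq,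
            Set.mem_empty_iff_false, iff_false]
          rintro ⟨⟨hp1, hp2⟩, Y, hY, hc1, hc2⟩
          by_cases hYX : Y = X
          · subst hYX; omega
          · rcases hleft Y hY hYX with h' | h' <;> omega
        rw [this]; simp
      · have hyX2 : X.2 < y := by omega
        have hset : Set.Icc lo y ∩ {p | PCov C p} =
            Set.Icc X.1 X.2 ∪ (Set.Icc (X.2 + 1) y ∩ {p | PCov {Y ∈ C | X.2 < Y.1} p}) := by
          ext p
          simp only [Set.mem_inter_iff, Set.mem_Icc, Set.mem_union, Set.mem_setOf_eq]
          constructor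
          · rintro ⟨⟨hp1, hp2⟩, Y, hY, hc1, hc2⟩
            by_cases hYX : Y = X
            · subst hYX; exact Or.inl ⟨hc1, hc2⟩
            · rcases hleft Y hY hYX with h' | h'
              · exact Or.inl ⟨by omega, by omega⟩
              · exact Or.inr ⟨⟨by omega, hp2⟩, Y, ⟨hY, h'⟩, hc1, hc2⟩
          · rintro (⟨hp1, hp2⟩ | ⟨⟨hp1, hp2⟩, Y, ⟨hY, h'⟩, hc1, hc2⟩)
            · exact ⟨⟨by omega, by omega⟩, X, hX, hp1, hp2⟩
            · exact ⟨⟨by omega, hp2⟩, Y, hY, hc1, hc2⟩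
        rw [hset, Set.ncard_union_eq ?_ (Set.finite_Icc _ _)
          ((Set.finite_Icc _ _).inter_of_left _)]
        · apply Nat.dvd_add
          · rw [← Finset.coe_Icc, Set.ncard_coe_finset, Nat.card_Icc]
            have heq : X.2 + 1 - X.1 = X.2 - X.1 + 1 := by omega
            rw [heq]; exact hdvd
          · exact ih (X.2 + 1) hi _ (by omega) (pfam_right h X)
              y ⟨by omega, hy2, fun ⟨Y, ⟨hY, _⟩, hc⟩ => hy3 ⟨Y, hY, hc⟩⟩
        · rw [Set.disjoint_left]
          rintro p hp ⟨hp2, _⟩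
          have := (Set.mem_Icc.1 hp).2
          have := (Set.mem_Icc.1 hp2).1
          omega

lemma span_two {d lo hi : ℕ} {C : Set (ℕ × ℕ)} (h : PFam d lo hi C) {x y : ℕ}
    (hx : x ∈ PFree lo hi C) (hy : y ∈ PFree lo hi C) (hxy : x ≤ y) :
    (d + 1) ∣ (Set.Icc x y ∩ {p | PCov C p}).ncard := by
  have h1 := span d (hi + 1 - lo) lo hi C le_rfl h y hy
  have h2 := span d (hi + 1 - lo) lo hi C le_rfl h x hx
  have hsplit : Set.Icc lo y ∩ {p | PCov C p} =
      (Set.Icc lo x ∩ {p | PCov C p}) ∪ (Set.Icc x y ∩ {p | PCov C p}) := by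
    ext p
    simp only [Set.mem_inter_iff, Set.mem_Icc, Set.mem_union, Set.mem_setOf_eq]
    have := hx.1
    constructor
    · rintro ⟨⟨hp1, hp2⟩, hc⟩
      rcases le_or_gt p x with h' | h'
      · exact Or.inl ⟨⟨hp1, h'⟩, hc⟩
      · exact Or.inr ⟨⟨by omega, hp2⟩, hc⟩
    · rintro (⟨⟨hp1, hp2⟩, hc⟩ | ⟨⟨hp1, hp2⟩, hc⟩)
      · exact ⟨⟨hp1, by omega⟩, hc⟩
      · exact ⟨⟨by omega, hp2⟩, hc⟩
  have hdisj : Disjoint (Set.Icc lo x ∩ {p | PCov C p}) (Set.Icc x y ∩ {p | PCov C p}) := by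
    rw [Set.disjoint_left]
    rintro p ⟨hp1, hc1⟩ ⟨hp2, hc2⟩
    have e1 := (Set.mem_Icc.1 hp1).2
    have e2 := (Set.mem_Icc.1 hp2).1
    have : p = x := by omega
    subst this
    exact hx.2.2 hc1
  have hcard : (Set.Icc lo y ∩ {p | PCov C p}).ncard =
      (Set.Icc lo x ∩ {p | PCov C p}).ncard + (Set.Icc x y ∩ {p | PCov C p}).ncard := by
    rw [hsplit, Set.ncard_union_eq hdisj ((Set.finite_Icc _ _).inter_of_left _)
      ((Set.finite_Icc _ _).inter_of_left _)]
  have := Nat.dvd_sub h1 h2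
  have heq : (Set.Icc x y ∩ {p | PCov C p}).ncard =
      (Set.Icc lo y ∩ {p | PCov C p}).ncard - (Set.Icc lo x ∩ {p | PCov C p}).ncard := by omega
  rw [heq]; exact this

lemma window (k : ℕ) (hk : 0 < k) :
    ∀ m : ℕ, ∀ S : Finset ℕ, S.card = m → k ≤ m →
    ∃ x ∈ S, ∃ y ∈ S, x ≤ y ∧ (S.filter (fun p => x ≤ p ∧ p ≤ y)).card = k := by
  intro m
  induction m using Nat.strong_induction_on with
  | _ m ih =>
    intro S hS hkm
    have hSne : S.Nonempty := Finset.card_pos.1 (by omega)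
    by_cases hm : m = k
    · refine ⟨S.min' hSne, S.min'_mem hSne, S.max' hSne, S.max'_mem hSne,
        S.min'_le _ (S.max'_mem hSne), ?_⟩
      rw [Finset.filter_true_of_mem fun p hp => ⟨S.min'_le p hp, S.le_max' p hp⟩]
      omega
    · have hlt : k < m := by omega
      set mx := S.max' hSne with hmx
      have hcard : (S.erase mx).card = m - 1 := by
        rw [Finset.card_erase_of_mem (S.max'_mem hSne)]; omega
      obtain ⟨x, hx, y, hy, hxy, hwin⟩ := ih (m - 1) (by omega) (S.erase mx) hcard (by omega)
      refine ⟨x, Finset.mem_of_mem_erase hx, y, Finset.mem_of_mem_erase hy, hxy, ?_⟩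
      have hymx : y < mx := lt_of_le_of_ne (S.le_max' y (Finset.mem_of_mem_erase hy))
        (Finset.ne_of_mem_erase hy)
      rw [← hwin]
      apply Finset.card_bij (fun p _ => p) ?_ (fun _ _ _ _ h => h) ?_
      · intro p hp
        simp only [Finset.mem_filter, Finset.mem_erase] at hp ⊢
        exact ⟨⟨by omega, hp.1⟩, hp.2⟩
      · intro p hp
        simp only [Finset.mem_filter, Finset.mem_erase] at hp
        exact ⟨p, by simp only [Finset.mem_filter]; exact ⟨hp.1.2, hp.2⟩, rfl⟩

lemma freechord {d lo hi : ℕ} {C : Set (ℕ × ℕ)} (hd : 1 ≤ d) (h : PFam d lo hi C)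
    (hG : d + 1 ≤ (PFree lo hi C).ncard) :
    ∃ ch : ℕ × ℕ, PValid d lo hi ch ∧ ∀ Y ∈ C, PCompat ch Y := by
  have hfin := pfree_finite lo hi C
  have hcard : hfin.toFinset.card = (PFree lo hi C).ncard :=
    (Set.ncard_eq_toFinset_card _ hfin).symm
  obtain ⟨x, hxF, y, hyF, hxy, hwin⟩ := window (d + 1) (by omega) hfin.toFinset.card
    hfin.toFinset rfl (by omega)
  have hxfree : x ∈ PFree lo hi C := hfin.mem_toFinset.1 hxF
  have hyfree : y ∈ PFree lo hi C := hfin.mem_toFinset.1 hyF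
  have hxlty : x < y := by
    rcases lt_or_eq_of_le hxy with h' | h'
    · exact h'
    · exfalso
      subst h'
      have : hfin.toFinset.filter (fun p => x ≤ p ∧ p ≤ x) ⊆ {x} := by
        intro p hp
        simp only [Finset.mem_filter] at hp
        simp only [Finset.mem_singleton]
        omega
      have := Finset.card_le_card this
      simp only [Finset.card_singleton] at this
      omega
  -- count: Icc x y splits into free and covered parts
  have hfree_eq : (Set.Icc x y ∩ PFree lo hi C).ncard = d + 1 := by
    have : Set.Icc x y ∩ PFree lo hi C =
        ↑(hfin.toFinset.filter (fun p => x ≤ p ∧ p ≤ y)) := by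
      ext p
      simp only [Set.mem_inter_iff, Set.mem_Icc, Finset.coe_filter, Set.mem_setOf_eq,
        Set.Finite.mem_toFinset]
      tauto
    rw [this, Set.ncard_coe_finset, hwin]
  have hsplit : (Set.Icc x y).ncard =
      (Set.Icc x y ∩ PFree lo hi C).ncard + (Set.Icc x y ∩ {p | PCov C p}).ncard := by
    rw [← Set.ncard_union_eq ?_ ((Set.finite_Icc _ _).inter_of_left _)
      ((Set.finite_Icc _ _).inter_of_left _)]
    · congr 1
      ext p
      simp only [Set.mem_union, Set.mem_inter_iff, Set.mem_Icc, Set.mem_setOf_eq, PFree]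
      have hx1 := hxfree.1
      have hy1 := hyfree.2.1
      constructor
      · intro hp
        by_cases hc : PCov C p
        · exact Or.inr ⟨hp, hc⟩
        · exact Or.inl ⟨hp, ⟨by omega, ⟨by omega, hc⟩⟩⟩
      · rintro (⟨hp, _⟩ | ⟨hp, _⟩) <;> exact hp
    · rw [Set.disjoint_left]
      rintro p ⟨_, _, _, hnc⟩ ⟨_, hc⟩
      exact hnc hc
  have hIcc : (Set.Icc x y).ncard = y + 1 - x := by
    rw [← Finset.coe_Icc, Set.ncard_coe_finset, Nat.card_Icc]
  obtain ⟨q, hq⟩ := span_two h hxfree hyfree hxy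
  refine ⟨(x, y), ⟨hxfree.1, hxlty, hyfree.2.1, ?_⟩, ?_⟩
  · refine ⟨1 + q, ?_⟩
    simp only
    have hmul : (d + 1) * (1 + q) = (d + 1) + (d + 1) * q := by ring
    omega
  · intro Y hY
    obtain ⟨hw1, hw2, hw3, _⟩ := h.1 Y hY
    have hxnc : ¬ (Y.1 ≤ x ∧ x ≤ Y.2) := fun hc => hxfree.2.2 ⟨Y, hY, hc⟩
    have hync : ¬ (Y.1 ≤ y ∧ y ≤ Y.2) := fun hc => hyfree.2.2 ⟨Y, hY, hc⟩
    unfold PCompat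
    simp only
    omega

lemma extend (d : ℕ) (hd : 1 ≤ d) : ∀ k lo hi : ℕ, ∀ C : Set (ℕ × ℕ),
    hi + 1 - lo ≤ k → PFam d lo hi C → C.ncard < (hi + 1 - lo) / (d + 1) →
    ∃ ch : ℕ × ℕ, PValid d lo hi ch ∧ ∀ Y ∈ C, PCompat ch Y := by
  intro k
  induction k with
  | zero =>
    intro lo hi C hk h hlt
    exfalso
    have : hi + 1 - lo = 0 := by omega
    rw [this] at hlt
    simp at hlt
  | succ k ih =>
    intro lo hi C hk h hlt
    obtain ⟨t, ht1, ht2⟩ := key d (hi + 1 - lo) lo hi C le_rfl h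
    by_cases hG : d + 1 ≤ (PFree lo hi C).ncard
    · exact freechord hd h hG
    · push_neg at hG
      have htd : (hi + 1 - lo) / (d + 1) = t := by
        rw [ht1, Nat.add_mul_div_left _ _ (by omega : 0 < d + 1), Nat.div_eq_of_lt hG]
        omega
      rw [htd] at hlt
      have hne : C.Nonempty := by
        rcases Set.eq_empty_or_nonempty C with rfl | h'
        · exfalso
          rw [pfree_empty, ← Finset.coe_Icc, Set.ncard_coe_finset, Nat.card_Icc] at ht1
          have : (d + 1) * t = 0 := by omega
          have ht0 : t = 0 := by
            rcases Nat.mul_eq_zero.1 this with h'' | h'' <;> omega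
          rw [ht0] at hlt
          simp at hlt
        · exact h'
      obtain ⟨X, hX, hleft⟩ := exists_leftmost h hne
      obtain ⟨hlo, hXlt, hhi, hdvd⟩ := h.1 X hX
      obtain ⟨m, hm⟩ := hdvd
      have hm1 : 1 ≤ m := by
        rcases Nat.eq_zero_or_pos m with rfl | h' 
        · omega
        · exact h'
      obtain ⟨tin, hti1, hti2⟩ := key d ((X.2 - 1) + 1 - (X.1 + 1)) (X.1 + 1) (X.2 - 1) _
        le_rfl (pfam_inner h X)
      obtain ⟨tr, htr1, htr2⟩ := key d (hi + 1 - (X.2 + 1)) (X.2 + 1) hi _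
        le_rfl (pfam_right h X)
      by_cases hin : {Y ∈ C | X.1 < Y.1 ∧ Y.2 < X.2}.ncard <
          ((X.2 - 1) + 1 - (X.1 + 1)) / (d + 1)
      · obtain ⟨ch, hchv, hchc⟩ := ih (X.1 + 1) (X.2 - 1) _ (by omega) (pfam_inner h X) hin
        obtain ⟨hc1, hc2, hc3, hc4⟩ := hchv
        refine ⟨ch, ⟨by omega, hc2, by omega, hc4⟩, ?_⟩
        intro Y hY
        by_cases hYX : Y = X
        · subst hYX
          unfold PCompat
          omega
        · rcases hleft Y hY hYX with h' | h'
          · exact hchc Y ⟨hY, h'⟩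
          · unfold PCompat
            omega
      · by_cases hr : {Y ∈ C | X.2 < Y.1}.ncard < (hi + 1 - (X.2 + 1)) / (d + 1)
        · obtain ⟨ch, hchv, hchc⟩ := ih (X.2 + 1) hi _ (by omega) (pfam_right h X) hr
          obtain ⟨hc1, hc2, hc3, hc4⟩ := hchv
          refine ⟨ch, ⟨by omega, hc2, hc3, hc4⟩, ?_⟩
          intro Y hY
          by_cases hYX : Y = X
          · subst hYX
            unfold PCompat
            omega
          · rcases hleft Y hY hYX with h' | h'
            · unfold PCompat
              omega
            · exact hchc Y ⟨hY, h'⟩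
        · exfalso
          push_neg at hin hr
          -- interior floor = m - 1
          have hAin : (X.2 - 1) + 1 - (X.1 + 1) = X.2 - X.1 - 1 := by omega
          have hfloor_in : ((X.2 - 1) + 1 - (X.1 + 1)) / (d + 1) = m - 1 := by
            rw [hAin]
            have : X.2 - X.1 - 1 = (d + 1) * (m - 1) + (d - 1) := by
              have hexp : (d + 1) * (m - 1) + (d + 1) * 1 = (d + 1) * m := by
                rw [← Nat.mul_add]; congr 1; omega
              omega
            rw [this, Nat.mul_add_div (by omega : 0 < d + 1), Nat.div_eq_of_lt (by omega)]
            omega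
          -- right: tr ≤ floor_r ≤ |Cr|, and |Cr| ≤ tr
          have htrle : tr ≤ (hi + 1 - (X.2 + 1)) / (d + 1) := by
            rw [htr1, Nat.add_mul_div_left _ _ (by omega : 0 < d + 1)]
            exact Nat.le_add_left _ _
          have hCr : {Y ∈ C | X.2 < Y.1}.ncard = tr := by omega
          -- t = m + tr
          have hfs := free_split_ncard h hX hleft
          have htmtr : t = m + tr := by
            have hP : (d + 1) * t = (d + 1) * (m + tr) := by
              rw [Nat.mul_add]
              generalize hA : (d + 1) * m = A at hm ⊢
              generalize hB : (d + 1) * tr = B at htr1 ⊢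
              generalize hC : (d + 1) * t = Ct at ht1 ⊢
              omega
            exact Nat.eq_of_mul_eq_mul_left (by omega) hP
          have hdec := decomp_ncard h hX hleft
          rw [hfloor_in] at hin
          omega

lemma pure_main {d lo hi : ℕ} {C : Set (ℕ × ℕ)} (hd : 1 ≤ d) (h : PFam d lo hi C)
    (hmax : ∀ ch : ℕ × ℕ, PValid d lo hi ch → (∀ Y ∈ C, PCompat ch Y) → ch ∈ C) :
    C.ncard = (hi + 1 - lo) / (d + 1) := by
  obtain ⟨t, ht1, ht2⟩ := key d (hi + 1 - lo) lo hi C le_rfl h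
  have hub : C.ncard ≤ (hi + 1 - lo) / (d + 1) := by
    rw [ht1, Nat.add_mul_div_left _ _ (by omega : 0 < d + 1)]
    exact le_trans ht2 (Nat.le_add_left _ _)
  rcases lt_or_eq_of_le hub with hlt | heq
  · exfalso
    obtain ⟨ch, hchv, hchc⟩ := extend d hd (hi + 1 - lo) lo hi C le_rfl h hlt
    have hin := hmax ch hchv hchc
    have := hchc ch hin
    unfold PCompat at this
    have := hchv.2.1
    omega
  · exact heq

end Pure
namespace Circle

open Pure

variable {N : ℕ} [NeZero N]

lemma val_cast_sub {p q : ℕ} (hp : p < N) (hq : q < N) :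
    ((q : ZMod N) - (p : ZMod N)).val = if p ≤ q then q - p else q + N - p := by
  have hN : 0 < N := Nat.pos_of_ne_zero (NeZero.ne N)
  split_ifs with h
  · have e : (q : ZMod N) - p = ((q - p : ℕ) : ZMod N) := by
      rw [Nat.cast_sub h]
    rw [e, ZMod.val_cast_of_lt (by omega)]
  · have e : (q : ZMod N) - p = ((q + N - p : ℕ) : ZMod N) := by
      rw [Nat.cast_sub (by omega : p ≤ q + N)]
      push_cast [ZMod.natCast_self]
      ring
    rw [e, ZMod.val_cast_of_lt (by omega)]

lemma add_cast_inj {c : ZMod N} {p q : ℕ} (hp : p < N) (hq : q < N)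
    (h : c + (p : ZMod N) = c + (q : ZMod N)) : p = q := by
  have h2 : (p : ZMod N) = q := by
    have := congrArg (fun z => z - c) h
    simpa using this
  have := congrArg ZMod.val h2
  rwa [ZMod.val_cast_of_lt hp, ZMod.val_cast_of_lt hq] at this

lemma rep (c x : ZMod N) : c + (((x - c).val : ℕ) : ZMod N) = x := by
  rw [ZMod.natCast_rightInverse (x - c)]
  ring

lemma between_pos {c : ZMod N} {a b x : ℕ} (ha : a < N) (hb : b < N) (hx : x < N) :
    Between (c + (a : ZMod N)) (c + (b : ZMod N)) (c + (x : ZMod N)) ↔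
      (0 < (if a ≤ x then x - a else x + N - a) ∧
       (if a ≤ x then x - a else x + N - a) < (if a ≤ b then b - a else b + N - a)) := by
  unfold Between
  have e1 : (c + (x : ZMod N)) - (c + (a : ZMod N)) = (x : ZMod N) - a := by ring
  have e2 : (c + (b : ZMod N)) - (c + (a : ZMod N)) = (b : ZMod N) - a := by ring
  rw [e1, e2, val_cast_sub ha hx, val_cast_sub ha hb]

lemma between_pos_lt {c : ZMod N} {a b x : ℕ} (hab : a < b) (hb : b < N) (hx : x < N) :
    Between (c + (a : ZMod N)) (c + (b : ZMod N)) (c + (x : ZMod N)) ↔ (a < x ∧ x < b) := by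
  rw [between_pos (by omega) hb hx]
  split_ifs <;> omega

lemma between_neg {a b x : ZMod N} (hab : a ≠ b) (hax : a ≠ x) (hbx : b ≠ x) :
    (Between b a x ↔ ¬ Between a b x) := by
  have hN : 0 < N := Nat.pos_of_ne_zero (NeZero.ne N)
  set p := (b - a).val with hpdef
  set ξ := (x - a).val with hξdef
  have hp : p < N := ZMod.val_lt _
  have hξ : ξ < N := ZMod.val_lt _
  have hb' : a + ((p : ℕ) : ZMod N) = b := rep a b
  have hx' : a + ((ξ : ℕ) : ZMod N) = x := rep a x
  have hp0 : p ≠ 0 := by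
    intro h
    apply hab
    have : a + ((p : ℕ) : ZMod N) = a + ((0 : ℕ) : ZMod N) := by rw [h]
    rw [hb'] at this
    simpa using this.symm
  have hξ0 : ξ ≠ 0 := by
    intro h
    apply hax
    have : a + ((ξ : ℕ) : ZMod N) = a + ((0 : ℕ) : ZMod N) := by rw [h]
    rw [hx'] at this
    simpa using this.symm
  have hpξ : p ≠ ξ := by
    intro h
    apply hbx
    rw [← hb', ← hx', h]
  have K1 := between_pos (c := a) (a := p) (b := 0) (x := ξ) hp hN hξ
  have K2 := between_pos (c := a) (a := 0) (b := p) (x := ξ) hN hp hξ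
  simp only [Nat.cast_zero, add_zero] at K1 K2
  rw [hb', hx'] at K1 K2
  rw [K1, K2]
  split_ifs <;> omega

lemma xor_not {P Q : Prop} : Xor' (¬P) (¬Q) ↔ Xor' P Q := by
  unfold Xor' Xor; tauto

lemma xor_comm' {P Q : Prop} : Xor' P Q ↔ Xor' Q P := by
  unfold Xor' Xor; tauto

lemma crosses_iff {a b z w : ZMod N} (hab : a ≠ b) (hzw : z ≠ w)
    (haz : a ≠ z) (haw : a ≠ w) (hbz : b ≠ z) (hbw : b ≠ w) :
    Crosses s(a, b) s(z, w) ↔ Xor' (Between a b z) (Between a b w) := by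
  constructor
  · rintro ⟨a', b', z', w', h1, h2, hx⟩
    rw [Sym2.eq_iff] at h1 h2
    have negz := between_neg hab haz hbz
    have negw := between_neg hab haw hbw
    rcases h1 with ⟨rfl, rfl⟩ | ⟨rfl, rfl⟩ <;> rcases h2 with ⟨rfl, rfl⟩ | ⟨rfl, rfl⟩
    · exact hx
    · exact xor_comm'.1 hx
    · rw [negz, negw] at hx
      exact xor_not.1 hx
    · rw [negw, negz] at hx
      exact xor_not.1 (xor_comm'.1 hx)
  · intro hx
    exact ⟨a, b, z, w, rfl, rfl, hx⟩

lemma disj_of_compat (c : ZMod N) {p1 p2 q1 q2 : ℕ} (h12 : p1 < p2) (h2N : p2 < N)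
    (h34 : q1 < q2) (h4N : q2 < N) (hcomp : PCompat (p1, p2) (q1, q2)) :
    DisjointDiag (s((c + (p1 : ZMod N)), (c + (p2 : ZMod N))))
      (s((c + (q1 : ZMod N)), (c + (q2 : ZMod N)))) := by
  have hne : p1 ≠ q1 ∧ p1 ≠ q2 ∧ p2 ≠ q1 ∧ p2 ≠ q2 := by
    unfold PCompat at hcomp; simp only at hcomp; omega
  have z11 : c + (p1 : ZMod N) ≠ c + (q1 : ZMod N) :=
    fun h => hne.1 (add_cast_inj (by omega) (by omega) h)
  have z12 : c + (p1 : ZMod N) ≠ c + (q2 : ZMod N) :=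
    fun h => hne.2.1 (add_cast_inj (by omega) (by omega) h)
  have z21 : c + (p2 : ZMod N) ≠ c + (q1 : ZMod N) :=
    fun h => hne.2.2.1 (add_cast_inj (by omega) (by omega) h)
  have z22 : c + (p2 : ZMod N) ≠ c + (q2 : ZMod N) :=
    fun h => hne.2.2.2 (add_cast_inj (by omega) (by omega) h)
  have zab : c + (p1 : ZMod N) ≠ c + (p2 : ZMod N) :=
    fun h => (by omega : p1 ≠ p2) (add_cast_inj (by omega) (by omega) h)
  have zzw : c + (q1 : ZMod N) ≠ c + (q2 : ZMod N) :=
    fun h => (by omega : q1 ≠ q2) (add_cast_inj (by omega) (by omega) h)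
  constructor
  · rintro v ⟨hv1, hv2⟩
    rw [Sym2.mem_iff] at hv1 hv2
    rcases hv1 with rfl | rfl <;> rcases hv2 with h | h <;>
      first
        | exact z11 h | exact z12 h | exact z21 h | exact z22 h
  · intro hcr
    rw [crosses_iff zab zzw z11 z12 z21 z22] at hcr
    rw [between_pos_lt h12 h2N (by omega), between_pos_lt h12 h2N (by omega)] at hcr
    unfold Xor' Xor at hcr
    unfold PCompat at hcomp
    simp only at hcomp
    omega

lemma compat_of_disj (c : ZMod N) {p1 p2 q1 q2 : ℕ} (h12 : p1 < p2) (h2N : p2 < N)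
    (h34 : q1 < q2) (h4N : q2 < N)
    (hdisj : DisjointDiag (s((c + (p1 : ZMod N)), (c + (p2 : ZMod N))))
      (s((c + (q1 : ZMod N)), (c + (q2 : ZMod N))))) : PCompat (p1, p2) (q1, q2) := by
  obtain ⟨hvert, hcr⟩ := hdisj
  have hne : ∀ {pi qj : ℕ}, pi < N → qj < N →
      (c + (pi : ZMod N) ∈ s((c + (p1 : ZMod N)), (c + (p2 : ZMod N)))) →
      (c + (qj : ZMod N) ∈ s((c + (q1 : ZMod N)), (c + (q2 : ZMod N)))) → pi ≠ qj := by
    intro pi qj hpi hqj hmem1 hmem2 h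
    subst h
    exact hvert (c + (pi : ZMod N)) ⟨hmem1, hmem2⟩
  have mem11 : c + (p1 : ZMod N) ∈ s((c + (p1 : ZMod N)), (c + (p2 : ZMod N))) :=
    Sym2.mem_iff.2 (Or.inl rfl)
  have mem12 : c + (p2 : ZMod N) ∈ s((c + (p1 : ZMod N)), (c + (p2 : ZMod N))) :=
    Sym2.mem_iff.2 (Or.inr rfl)
  have mem21 : c + (q1 : ZMod N) ∈ s((c + (q1 : ZMod N)), (c + (q2 : ZMod N))) :=
    Sym2.mem_iff.2 (Or.inl rfl)
  have mem22 : c + (q2 : ZMod N) ∈ s((c + (q1 : ZMod N)), (c + (q2 : ZMod N))) :=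
    Sym2.mem_iff.2 (Or.inr rfl)
  have h11 := hne (by omega) (by omega) mem11 mem21
  have h12' := hne (by omega) (by omega) mem11 mem22
  have h21 := hne (by omega) (by omega) mem12 mem21
  have h22 := hne (by omega) (by omega) mem12 mem22
  have z11 : c + (p1 : ZMod N) ≠ c + (q1 : ZMod N) :=
    fun h => h11 (add_cast_inj (by omega) (by omega) h)
  have z12 : c + (p1 : ZMod N) ≠ c + (q2 : ZMod N) :=
    fun h => h12' (add_cast_inj (by omega) (by omega) h)
  have z21 : c + (p2 : ZMod N) ≠ c + (q1 : ZMod N) :=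
    fun h => h21 (add_cast_inj (by omega) (by omega) h)
  have z22 : c + (p2 : ZMod N) ≠ c + (q2 : ZMod N) :=
    fun h => h22 (add_cast_inj (by omega) (by omega) h)
  have zab : c + (p1 : ZMod N) ≠ c + (p2 : ZMod N) :=
    fun h => (by omega : p1 ≠ p2) (add_cast_inj (by omega) (by omega) h)
  have zzw : c + (q1 : ZMod N) ≠ c + (q2 : ZMod N) :=
    fun h => (by omega : q1 ≠ q2) (add_cast_inj (by omega) (by omega) h)
  rw [crosses_iff zab zzw z11 z12 z21 z22] at hcr
  rw [between_pos_lt h12 h2N (by omega), between_pos_lt h12 h2N (by omega)] at hcr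
  unfold Xor' Xor at hcr
  unfold PCompat
  simp only
  omega

end Circle

section DDiag

open Pure Circle

lemma kbound {d n N j : ℕ} (hd : 1 ≤ d) (hn : 0 < n) (hN : N = (d + 1) * n + d - 1)
    (hj : j ≤ n - 1) : d + (d + 1) * j + d ≤ N ∧ 2 ≤ N := by
  have h1 : (d + 1) * j ≤ (d + 1) * (n - 1) := Nat.mul_le_mul le_rfl hj
  have h2 : (d + 1) * (n - 1) + (d + 1) * 1 = (d + 1) * n := by
    rw [← Nat.mul_add]; congr 1; omega
  have h3 : (d + 1) * 1 = d + 1 := by ring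
  have h4 : 2 * n ≤ (d + 1) * n := Nat.mul_le_mul (by omega) le_rfl
  omega

lemma ddiag_ne {d n N : ℕ} [NeZero N] (hd : 1 ≤ d) (hn : 0 < n)
    (hN : N = (d + 1) * n + d - 1) {z w : ZMod N} (h : IsDDiag d n s(z, w)) : z ≠ w := by
  obtain ⟨i, j, hj, hX⟩ := h
  obtain ⟨hK, hN2⟩ := kbound hd hn hN hj
  rintro rfl
  rw [Sym2.eq_iff] at hX
  have hIK : i + ((d + (d + 1) * j : ℕ) : ZMod N) = i := by
    rcases hX with ⟨h1, h2⟩ | ⟨h1, h2⟩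
    · exact h2.symm.trans h1
    · exact h1.symm.trans h2
  have h0 : ((d + (d + 1) * j : ℕ) : ZMod N) = 0 := by
    have := congrArg (fun t => t - i) hIK
    simpa using this
  have := congrArg ZMod.val h0
  rw [ZMod.val_cast_of_lt (by omega), ZMod.val_zero] at this
  omega

lemma ddiag_iff {d n N : ℕ} [NeZero N] (hd : 1 ≤ d) (hn : 0 < n)
    (hN : N = (d + 1) * n + d - 1) (c : ZMod N) {p q : ℕ} (hpq : p < q) (hq : q < N) :
    IsDDiag d n (s((c + (p : ZMod N)), (c + (q : ZMod N)))) ↔ (d + 1) ∣ (q - p + 1) := by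
  have hN0 : 0 < N := Nat.pos_of_ne_zero (NeZero.ne N)
  have hn2 : 2 * n ≤ (d + 1) * n := Nat.mul_le_mul (by omega) le_rfl
  constructor
  · rintro ⟨i, j, hj, hX⟩
    obtain ⟨hK, hN2⟩ := kbound hd hn hN hj
    rw [Sym2.eq_iff] at hX
    rcases hX with ⟨h1, h2⟩ | ⟨h1, h2⟩
    · -- i = c + p, i + K = c + q
      rw [← h1, add_assoc] at h2
      have h3 : ((p + (d + (d + 1) * j) : ℕ) : ZMod N) = (q : ZMod N) := by
        rw [Nat.cast_add]
        exact (add_left_cancel h2).symm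
      by_cases hw : p + (d + (d + 1) * j) < N
      · have := congrArg ZMod.val h3
        rw [ZMod.val_cast_of_lt hw, ZMod.val_cast_of_lt hq] at this
        refine ⟨j + 1, ?_⟩
        have h5 : (d + 1) * (j + 1) = (d + 1) * j + (d + 1) := by ring
        omega
      · exfalso
        have hwr : ((p + (d + (d + 1) * j) - N : ℕ) : ZMod N)
            = ((p + (d + (d + 1) * j) : ℕ) : ZMod N) := by
          have e : (p + (d + (d + 1) * j) - N) + N = p + (d + (d + 1) * j) := by omega
          conv_rhs => rw [← e]
          rw [Nat.cast_add, ZMod.natCast_self, add_zero]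
        rw [← hwr] at h3
        have hpN : p < N := by omega
        have := congrArg ZMod.val h3
        rw [ZMod.val_cast_of_lt (by omega), ZMod.val_cast_of_lt hq] at this
        omega
    · -- i = c + q, i + K = c + p
      rw [← h2, add_assoc] at h1
      have h3 : ((q + (d + (d + 1) * j) : ℕ) : ZMod N) = (p : ZMod N) := by
        rw [Nat.cast_add]
        exact (add_left_cancel h1).symm
      have hpN : p < N := by omega
      by_cases hw : q + (d + (d + 1) * j) < N
      · exfalso
        have := congrArg ZMod.val h3
        rw [ZMod.val_cast_of_lt hw, ZMod.val_cast_of_lt hpN] at this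
        omega
      · have hwr : ((q + (d + (d + 1) * j) - N : ℕ) : ZMod N)
            = ((q + (d + (d + 1) * j) : ℕ) : ZMod N) := by
          have e : (q + (d + (d + 1) * j) - N) + N = q + (d + (d + 1) * j) := by omega
          conv_rhs => rw [← e]
          rw [Nat.cast_add, ZMod.natCast_self, add_zero]
        rw [← hwr] at h3
        have := congrArg ZMod.val h3
        rw [ZMod.val_cast_of_lt (by omega), ZMod.val_cast_of_lt hpN] at this
        -- q + K - N = p, so q - p = N - K
        refine ⟨n - j, ?_⟩
        have e1 : (d + 1) * (n - j) + (d + 1) * j = (d + 1) * n := by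
          rw [← Nat.mul_add]; congr 1; omega
        omega
  · rintro ⟨e, he⟩
    have he1 : 1 ≤ e := by
      rcases Nat.eq_zero_or_pos e with rfl | h'
      · omega
      · exact h'
    have hjn : e ≤ n := by
      by_contra h'
      push_neg at h'
      have hmul := Nat.mul_le_mul (le_refl (d + 1)) (by omega : n + 1 ≤ e)
      have h1 : (d + 1) * (n + 1) = (d + 1) * n + (d + 1) := by ring
      omega
    refine ⟨c + (p : ZMod N), e - 1, by omega, ?_⟩
    have hK : d + (d + 1) * (e - 1) = q - p := by
      have h2 : (d + 1) * (e - 1) + (d + 1) = (d + 1) * e := by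
        rw [← Nat.mul_succ]; congr 1; omega
      omega
    rw [hK]
    have h3 : (c + (p : ZMod N)) + (((q - p : ℕ)) : ZMod N) = c + (q : ZMod N) := by
      rw [Nat.cast_sub (le_of_lt hpq)]
      ring
    rw [h3]

end DDiag


open Pure Circle in
/-- Every maximal `d`-Brauer relation on the `((d+1)n+d-1)`-gon has exactly `n` elements. -/
theorem maxBrauer_ncard {d n N : ℕ} (hd : 1 ≤ d) (hn : 0 < n)
    (hN : N = (d + 1) * n + d - 1) (B : Set (Sym2 (ZMod N)))
    (hB : IsMaxBrauer d n B) : B.ncard = n := by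
  have hn2 : 2 * n ≤ (d + 1) * n := Nat.mul_le_mul (by omega) le_rfl
  have hN2 : 2 ≤ N := by omega
  haveI : NeZero N := ⟨by omega⟩
  obtain ⟨⟨hdd, hpair⟩, hmax⟩ := hB
  have hBne : B.Nonempty := by
    by_contra hcon
    rw [Set.not_nonempty_iff_eq_empty] at hcon
    have hsingle : IsBrauer d n {s((0 : ZMod N), ((d : ℕ) : ZMod N))} := by
      constructor
      · intro X hX
        rw [Set.mem_singleton_iff] at hX
        subst hX
        exact ⟨0, 0, by omega, by norm_num⟩
      · intro X hX Y hY hne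
        rw [Set.mem_singleton_iff] at hX hY
        exact absurd (hX.trans hY.symm) hne
    have heq := hmax _ hsingle (by rw [hcon]; exact Set.empty_subset _)
    rw [hcon] at heq
    exact absurd heq (Set.singleton_ne_empty _)
  obtain ⟨X0, hX0B⟩ := hBne
  obtain ⟨c, j0, hj0, hX0⟩ := hdd X0 hX0B
  obtain ⟨hKb, _⟩ := kbound hd hn hN hj0
  set k0 := d + (d + 1) * j0 with hk0def
  have hk0N : k0 < N := by omega
  have hk01 : 1 ≤ k0 := by omega
  have hX0' : X0 = s((c + ((0 : ℕ) : ZMod N)), (c + ((k0 : ℕ) : ZMod N))) := by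
    rw [hX0]; norm_num
  set g : ℕ × ℕ → Sym2 (ZMod N) :=
    fun pq => s((c + (pq.1 : ZMod N)), (c + (pq.2 : ZMod N))) with hgdef
  have hgl : ∀ pq : ℕ × ℕ, g pq = s((c + (pq.1 : ZMod N)), (c + (pq.2 : ZMod N))) :=
    fun _ => rfl
  set C1 : Set (ℕ × ℕ) := {pq | 1 ≤ pq.1 ∧ pq.1 < pq.2 ∧ pq.2 ≤ k0 - 1 ∧ g pq ∈ B}
    with hC1def
  set C2 : Set (ℕ × ℕ) := {pq | k0 + 1 ≤ pq.1 ∧ pq.1 < pq.2 ∧ pq.2 ≤ N - 1 ∧ g pq ∈ B}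
    with hC2def
  have hC1mem : ∀ pq ∈ C1, 1 ≤ pq.1 ∧ pq.1 < pq.2 ∧ pq.2 ≤ k0 - 1 ∧ g pq ∈ B := fun pq h => h
  have hC2mem : ∀ pq ∈ C2, k0 + 1 ≤ pq.1 ∧ pq.1 < pq.2 ∧ pq.2 ≤ N - 1 ∧ g pq ∈ B :=
    fun pq h => h
  -- injectivity of g on sorted pairs
  have hginj : ∀ pq pq' : ℕ × ℕ, pq.1 < pq.2 → pq.2 < N → pq'.1 < pq'.2 → pq'.2 < N →
      g pq = g pq' → pq = pq' := by
    rintro ⟨p1, p2⟩ ⟨q1, q2⟩ h1 h2 h3 h4 h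
    rw [hgl, hgl] at h
    simp only at h
    rw [Sym2.eq_iff] at h
    simp only at h1 h2 h3 h4
    rcases h with ⟨ha, hb⟩ | ⟨ha, hb⟩
    · have e1 := add_cast_inj (by omega) (by omega) ha
      have e2 := add_cast_inj (by omega) (by omega) hb
      simp only [Prod.mk.injEq]
      omega
    · have e1 := add_cast_inj (by omega) (by omega) ha
      have e2 := add_cast_inj (by omega) (by omega) hb
      exfalso
      omega
  -- every chord of B other than X0 sorts into C1 or C2
  have hsort : ∀ Z ∈ B, Z ≠ X0 → ∃ pq : ℕ × ℕ, (pq ∈ C1 ∨ pq ∈ C2) ∧ g pq = Z := by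
    intro Z hZB hZne
    obtain ⟨z, w, rfl⟩ : ∃ z w, Z = s(z, w) := by
      induction Z using Sym2.ind with
      | _ z w => exact ⟨z, w, rfl⟩
    have hzw : z ≠ w := ddiag_ne hd hn hN (hdd _ hZB)
    have hz : c + (((z - c).val : ℕ) : ZMod N) = z := rep c z
    have hw : c + (((w - c).val : ℕ) : ZMod N) = w := rep c w
    have hpzN : (z - c).val < N := ZMod.val_lt _
    have hqwN : (w - c).val < N := ZMod.val_lt _
    have hpq : (z - c).val ≠ (w - c).val := by
      intro h; apply hzw; rw [← hz, ← hw, h]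
    have hdisj : DisjointDiag X0 s(z, w) := hpair X0 hX0B _ hZB (fun h => hZne h.symm)
    rcases Nat.lt_or_ge (z - c).val (w - c).val with hlt | hge
    · have hdisj' : DisjointDiag (s((c + ((0 : ℕ) : ZMod N)), (c + ((k0 : ℕ) : ZMod N))))
          (s((c + ((z - c).val : ZMod N)), (c + ((w - c).val : ZMod N)))) := by
        rw [← hX0', hz, hw]; exact hdisj
      have hcomp := compat_of_disj c (by omega) hk0N hlt hqwN hdisj'
      unfold Pure.PCompat at hcomp
      simp only at hcomp
      have hgZ : g ((z - c).val, (w - c).val) = s(z, w) := by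
        rw [hgl]; simp only; rw [hz, hw]
      refine ⟨((z - c).val, (w - c).val), ?_, hgZ⟩
      by_cases hcase : (w - c).val ≤ k0 - 1
      · left
        exact ⟨by omega, hlt, hcase, by rw [hgZ]; exact hZB⟩
      · right
        exact ⟨by omega, hlt, by omega, by rw [hgZ]; exact hZB⟩
    · have hlt : (w - c).val < (z - c).val := by omega
      have hdisj' : DisjointDiag (s((c + ((0 : ℕ) : ZMod N)), (c + ((k0 : ℕ) : ZMod N))))
          (s((c + ((w - c).val : ZMod N)), (c + ((z - c).val : ZMod N)))) := by
        rw [← hX0', hz, hw, Sym2.eq_swap]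
        exact hdisj
      have hcomp := compat_of_disj c (by omega) hk0N hlt hpzN hdisj'
      unfold Pure.PCompat at hcomp
      simp only at hcomp
      have hgZ : g ((w - c).val, (z - c).val) = s(z, w) := by
        rw [hgl]; simp only; rw [hz, hw, Sym2.eq_swap]
      refine ⟨((w - c).val, (z - c).val), ?_, hgZ⟩
      by_cases hcase : (z - c).val ≤ k0 - 1
      · left
        exact ⟨by omega, hlt, hcase, by rw [hgZ]; exact hZB⟩
      · right
        exact ⟨by omega, hlt, by omega, by rw [hgZ]; exact hZB⟩
  -- pure families
  have hfam1 : PFam d 1 (k0 - 1) C1 := by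
    constructor
    · intro pq hpq
      obtain ⟨h1, h2, h3, h4⟩ := hC1mem pq hpq
      exact ⟨h1, h2, h3, (ddiag_iff hd hn hN c h2 (by omega)).1 (hdd _ h4)⟩
    · intro pq hpq pq' hpq' hne
      obtain ⟨h1, h2, h3, h4⟩ := hC1mem pq hpq
      obtain ⟨h1', h2', h3', h4'⟩ := hC1mem pq' hpq'
      have hgne : g pq ≠ g pq' := fun h =>
        hne (hginj pq pq' h2 (by omega) h2' (by omega) h)
      have hdj := hpair _ h4 _ h4' hgne
      rw [hgl, hgl] at hdj
      have := compat_of_disj c h2 (by omega) h2' (by omega) hdj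
      exact this
  have hfam2 : PFam d (k0 + 1) (N - 1) C2 := by
    constructor
    · intro pq hpq
      obtain ⟨h1, h2, h3, h4⟩ := hC2mem pq hpq
      exact ⟨h1, h2, h3, (ddiag_iff hd hn hN c h2 (by omega)).1 (hdd _ h4)⟩
    · intro pq hpq pq' hpq' hne
      obtain ⟨h1, h2, h3, h4⟩ := hC2mem pq hpq
      obtain ⟨h1', h2', h3', h4'⟩ := hC2mem pq' hpq'
      have hgne : g pq ≠ g pq' := fun h =>
        hne (hginj pq pq' h2 (by omega) h2' (by omega) h)
      have hdj := hpair _ h4 _ h4' hgne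
      rw [hgl, hgl] at hdj
      exact compat_of_disj c h2 (by omega) h2' (by omega) hdj
  -- maximality transfer: a compatible valid chord lifts into B
  have hlift : ∀ ch : ℕ × ℕ, ch.1 < ch.2 → ch.2 < N →
      (∀ Y ∈ B, Y ≠ g ch → DisjointDiag (g ch) Y ∧ DisjointDiag Y (g ch)) →
      IsDDiag d n (g ch) → g ch ∈ B := by
    intro ch hc12 hc2N hdisjW hdiag
    have hBr : IsBrauer d n (insert (g ch) B) := by
      constructor
      · intro X hX
        rcases Set.mem_insert_iff.1 hX with rfl | hX
        · exact hdiag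
        · exact hdd X hX
      · intro X hX Y hY hneXY
        rcases Set.mem_insert_iff.1 hX with rfl | hX' <;>
          rcases Set.mem_insert_iff.1 hY with rfl | hY'
        · exact absurd rfl hneXY
        · exact (hdisjW Y hY' (fun h => hneXY h.symm)).1
        · exact (hdisjW X hX' hneXY).2
        · exact hpair X hX' Y hY' hneXY
    have heq := hmax _ hBr (Set.subset_insert _ _)
    rw [← heq]
    exact Set.mem_insert _ _
  -- pure maximality for C1
  have hmax1 : ∀ ch : ℕ × ℕ, PValid d 1 (k0 - 1) ch → (∀ Y ∈ C1, PCompat ch Y) → ch ∈ C1 := by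
    intro ch hv hcomp
    obtain ⟨hv1, hv2, hv3, hv4⟩ := hv
    have hchN : ch.2 < N := by omega
    have hdisjW : ∀ Y ∈ B, Y ≠ g ch → DisjointDiag (g ch) Y ∧ DisjointDiag Y (g ch) := by
      intro Y hYB hYne
      by_cases hYX0 : Y = X0
      · subst hYX0
        rw [hX0', hgl]
        constructor
        · exact disj_of_compat c hv2 hchN (by omega : (0 : ℕ) < k0) hk0N
            (by unfold Pure.PCompat; simp only; omega)
        · exact disj_of_compat c (by omega : (0 : ℕ) < k0) hk0N hv2 hchN
            (by unfold Pure.PCompat; simp only; omega)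
      · obtain ⟨pq, hpq12, hgpq⟩ := hsort Y hYB hYX0
        rcases hpq12 with hpq1 | hpq2
        · obtain ⟨h1, h2, h3, h4⟩ := hC1mem pq hpq1
          have hcompat := hcomp pq hpq1
          rw [← hgpq, hgl, hgl]
          constructor
          · exact disj_of_compat c hv2 hchN h2 (by omega) hcompat
          · exact disj_of_compat c h2 (by omega) hv2 hchN hcompat.symm
        · obtain ⟨h1, h2, h3, h4⟩ := hC2mem pq hpq2
          rw [← hgpq, hgl, hgl]
          constructor
          · exact disj_of_compat c hv2 hchN h2 (by omega)
              (by unfold Pure.PCompat; simp only; omega)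
          · exact disj_of_compat c h2 (by omega) hv2 hchN
              (by unfold Pure.PCompat; simp only; omega)
    have hdiag : IsDDiag d n (g ch) := by
      rw [hgl]
      exact (ddiag_iff hd hn hN c hv2 hchN).2 hv4
    exact ⟨hv1, hv2, hv3, hlift ch hv2 hchN hdisjW hdiag⟩
  have hmax2 : ∀ ch : ℕ × ℕ, PValid d (k0 + 1) (N - 1) ch →
      (∀ Y ∈ C2, PCompat ch Y) → ch ∈ C2 := by
    intro ch hv hcomp
    obtain ⟨hv1, hv2, hv3, hv4⟩ := hv
    have hchN : ch.2 < N := by omega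
    have hdisjW : ∀ Y ∈ B, Y ≠ g ch → DisjointDiag (g ch) Y ∧ DisjointDiag Y (g ch) := by
      intro Y hYB hYne
      by_cases hYX0 : Y = X0
      · subst hYX0
        rw [hX0', hgl]
        constructor
        · exact disj_of_compat c hv2 hchN (by omega : (0 : ℕ) < k0) hk0N
            (by unfold Pure.PCompat; simp only; omega)
        · exact disj_of_compat c (by omega : (0 : ℕ) < k0) hk0N hv2 hchN
            (by unfold Pure.PCompat; simp only; omega)
      · obtain ⟨pq, hpq12, hgpq⟩ := hsort Y hYB hYX0
        rcases hpq12 with hpq1 | hpq2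
        · obtain ⟨h1, h2, h3, h4⟩ := hC1mem pq hpq1
          rw [← hgpq, hgl, hgl]
          constructor
          · exact disj_of_compat c hv2 hchN h2 (by omega)
              (by unfold Pure.PCompat; simp only; omega)
          · exact disj_of_compat c h2 (by omega) hv2 hchN
              (by unfold Pure.PCompat; simp only; omega)
        · obtain ⟨h1, h2, h3, h4⟩ := hC2mem pq hpq2
          have hcompat := hcomp pq hpq2
          rw [← hgpq, hgl, hgl]
          constructor
          · exact disj_of_compat c hv2 hchN h2 (by omega) hcompat
          · exact disj_of_compat c h2 (by omega) hv2 hchN hcompat.symm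
    have hdiag : IsDDiag d n (g ch) := by
      rw [hgl]
      exact (ddiag_iff hd hn hN c hv2 hchN).2 hv4
    exact ⟨hv1, hv2, hv3, hlift ch hv2 hchN hdisjW hdiag⟩
  -- decomposition of B
  have hBdecomp : B = insert X0 (g '' C1 ∪ g '' C2) := by
    ext Z
    simp only [Set.mem_insert_iff, Set.mem_union, Set.mem_image]
    constructor
    · intro hZ
      by_cases hZX0 : Z = X0
      · exact Or.inl hZX0
      · obtain ⟨pq, hpq12, hgq⟩ := hsort Z hZ hZX0
        rcases hpq12 with h | h
        · exact Or.inr (Or.inl ⟨pq, h, hgq⟩)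
        · exact Or.inr (Or.inr ⟨pq, h, hgq⟩)
    · rintro (rfl | ⟨pq, hpq, rfl⟩ | ⟨pq, hpq, rfl⟩)
      · exact hX0B
      · exact hpq.2.2.2
      · exact hpq.2.2.2
  have hfin1 : C1.Finite := pfam_finite hfam1
  have hfin2 : C2.Finite := pfam_finite hfam2
  have hX0notin : X0 ∉ g '' C1 ∪ g '' C2 := by
    rintro (⟨pq, hpq, hgq⟩ | ⟨pq, hpq, hgq⟩)
    · obtain ⟨h1, h2, h3, _⟩ := hC1mem pq hpq
      rw [hgl, hX0'] at hgq
      rw [Sym2.eq_iff] at hgq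
      rcases hgq with ⟨ha, hb⟩ | ⟨ha, hb⟩
      · have := add_cast_inj (by omega) (by omega) ha
        omega
      · have := add_cast_inj (by omega) (by omega) hb
        omega
    · obtain ⟨h1, h2, h3, _⟩ := hC2mem pq hpq
      rw [hgl, hX0'] at hgq
      rw [Sym2.eq_iff] at hgq
      rcases hgq with ⟨ha, hb⟩ | ⟨ha, hb⟩
      · have := add_cast_inj (by omega) (by omega) ha
        omega
      · have := add_cast_inj (by omega) (by omega) hb
        omega
  have himdisj : Disjoint (g '' C1) (g '' C2) := by
    rw [Set.disjoint_left]
    rintro Z ⟨pq, hpq, rfl⟩ ⟨pq', hpq', hg'⟩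
    obtain ⟨h1, h2, h3, _⟩ := hC1mem pq hpq
    obtain ⟨h1', h2', h3', _⟩ := hC2mem pq' hpq'
    have := hginj pq' pq h2' (by omega) h2 (by omega) hg'
    subst this
    omega
  have hinj1 : Set.InjOn g C1 := by
    intro pq h pq' h' e
    obtain ⟨_, h2, h3, _⟩ := hC1mem pq h
    obtain ⟨_, h2', h3', _⟩ := hC1mem pq' h'
    exact hginj pq pq' h2 (by omega) h2' (by omega) e
  have hinj2 : Set.InjOn g C2 := by
    intro pq h pq' h' e
    obtain ⟨_, h2, h3, _⟩ := hC2mem pq h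
    obtain ⟨_, h2', h3', _⟩ := hC2mem pq' h'
    exact hginj pq pq' h2 (by omega) h2' (by omega) e
  have hnc1 : C1.ncard = j0 := by
    rw [pure_main hd hfam1 hmax1]
    have e : k0 - 1 + 1 - 1 = (d + 1) * j0 + (d - 1) := by omega
    rw [e, Nat.mul_add_div (by omega), Nat.div_eq_of_lt (by omega)]
    omega
  have hnc2 : C2.ncard = n - 1 - j0 := by
    rw [pure_main hd hfam2 hmax2]
    have e1 : (d + 1) * (n - 1 - j0) + (d + 1) * (j0 + 1) = (d + 1) * n := by
      rw [← Nat.mul_add]; congr 1; omega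
    have e2 : (d + 1) * (j0 + 1) = (d + 1) * j0 + (d + 1) := by ring
    have e : (N - 1) + 1 - (k0 + 1) = (d + 1) * (n - 1 - j0) + (d - 1) := by omega
    rw [e, Nat.mul_add_div (by omega), Nat.div_eq_of_lt (by omega)]
    omega
  rw [hBdecomp,
    Set.ncard_insert_of_notMem hX0notin ((hfin1.image g).union (hfin2.image g)),
    Set.ncard_union_eq himdisj (hfin1.image g) (hfin2.image g),
    Set.ncard_image_of_injOn hinj1, Set.ncard_image_of_injOn hinj2, hnc1, hnc2]
  omega

end BrauerComb
end

section
/- Let Π be an N-gon with N = (d+1)n + d - 1, and let V be a set of n vertices of Π. Then for every v ∈ V there exists an integer a with 0 ≤ a ≤ n-1 such that the number of elements of V lying strictly between v and v + d + (d+1)a (in clockwise order) equals a, and v + d + (d+1)a ∉ V. -/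
namespace BrauerComb

/-- For an `n`-element vertex set `V` of the `((d+1)n+d-1)`-gon and any `v ∈ V`,
there is `0 ≤ a ≤ n-1` such that exactly `a` elements of `V` lie strictly
(clockwise) between `v` and `v + d + (d+1)a`, and `v + d + (d+1)a ∉ V`. -/
theorem exists_good_diagonal {d n N : ℕ} (hd : 1 ≤ d) (hn : 0 < n)
    (hN : N = (d + 1) * n + d - 1) (V : Finset (ZMod N)) (hV : V.card = n) :
    ∀ v ∈ V, ∃ a : ℕ, a ≤ n - 1 ∧
      {x : ZMod N | x ∈ V ∧ Between v (v + ((d + (d + 1) * a : ℕ) : ZMod N)) x}.ncard = a ∧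
      (v + ((d + (d + 1) * a : ℕ) : ZMod N)) ∉ V := by

  obtain ⟨n', rfl⟩ : ∃ n', n = n' + 1 := ⟨n - 1, by omega⟩
  have hN' : N = (d + 1) * n' + 2 * d := by
    have h : (d+1) * (n'+1) = (d+1)*n' + (d+1) := by ring
    omega
  haveI : NeZero N := ⟨by omega⟩
  intro v hv
  have hmlt : ∀ a ≤ n', d + (d+1)*a < N := by
    intro a ha
    have : (d+1)*a ≤ (d+1)*n' := Nat.mul_le_mul_left _ ha
    omega
  have hval : ∀ a ≤ n', ((v + ((d + (d + 1) * a : ℕ) : ZMod N)) - v).val = d + (d+1)*a := by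
    intro a ha
    rw [add_sub_cancel_left, ZMod.val_natCast, Nat.mod_eq_of_lt (hmlt a ha)]
  set f : ℕ → Finset (ZMod N) := fun a =>
    V.filter (fun x => 0 < (x - v).val ∧ (x - v).val < d + (d+1)*a) with hf
  have hsetc : ∀ a ≤ n',
      {x : ZMod N | x ∈ V ∧ Between v (v + ((d + (d + 1) * a : ℕ) : ZMod N)) x}.ncard
        = (f a).card := by
    intro a ha
    rw [← Set.ncard_coe_finset]
    congr 1
    ext x
    simp only [hf, Finset.coe_filter, Set.mem_setOf_eq, Between, hval a ha]
  have hmono : ∀ a b : ℕ, a ≤ b → f a ⊆ f b := by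
    intro a b hab x hx
    simp only [hf, Finset.mem_filter] at hx ⊢
    obtain ⟨h1, h2, h3⟩ := hx
    refine ⟨h1, h2, ?_⟩
    have : (d+1)*a ≤ (d+1)*b := Nat.mul_le_mul_left _ hab
    omega
  have hsubV : ∀ a : ℕ, f a ⊆ V.erase v := by
    intro a x hx
    obtain ⟨hxV, hx1, _⟩ := Finset.mem_filter.mp hx
    refine Finset.mem_erase.mpr ⟨?_, hxV⟩
    intro h
    rw [h, sub_self, ZMod.val_zero] at hx1
    omega
  set A : Finset ℕ := (Finset.range (n'+1)).filter (fun a => a ≤ (f a).card) with hA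
  have hAne : A.Nonempty := ⟨0, by simp [hA]⟩
  set a := A.max' hAne with ha
  have haA : a ∈ A := A.max'_mem hAne
  have han' : a ≤ n' := by
    have := (Finset.mem_filter.mp haA).1
    rw [Finset.mem_range] at this
    omega
  have hale : a ≤ (f a).card := (Finset.mem_filter.mp haA).2
  set w := v + ((d + (d + 1) * a : ℕ) : ZMod N) with hw
  have hwv : w ≠ v := by
    intro h
    have hh := hval a han'
    rw [← hw, h, sub_self, ZMod.val_zero] at hh
    omega
  have hwout : w ∉ f a := by
    intro h
    have := (Finset.mem_filter.mp h).2
    rw [hw, hval a han'] at this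
    omega
  have key : (f a).card = a ∧ w ∉ V := by
    rcases eq_or_lt_of_le han' with hcase | hcase
    · -- a = n'
      have hcard1 : (f a).card ≤ n' := by
        calc (f a).card ≤ (V.erase v).card := Finset.card_le_card (hsubV a)
        _ = n' := by rw [Finset.card_erase_of_mem hv, hV]; omega
      have hfa : (f a).card = a := by omega
      refine ⟨hfa, fun hwV' => ?_⟩
      have hwe : w ∈ V.erase v := Finset.mem_erase.mpr ⟨hwv, hwV'⟩
      have hn'pos : 0 < n' := by
        have : 0 < (V.erase v).card := Finset.card_pos.mpr ⟨w, hwe⟩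
        rw [Finset.card_erase_of_mem hv, hV] at this
        omega
      have hsub2 : f a ⊆ (V.erase v).erase w := by
        intro x hx
        refine Finset.mem_erase.mpr ⟨?_, hsubV a hx⟩
        intro h; exact hwout (h ▸ hx)
      have hle : (f a).card ≤ n' - 1 := by
        calc (f a).card ≤ ((V.erase v).erase w).card := Finset.card_le_card hsub2
        _ = n' - 1 := by
            rw [Finset.card_erase_of_mem hwe, Finset.card_erase_of_mem hv, hV]
            omega
      omega
    · -- a < n'
      have h1 : a + 1 ∉ A := by
        intro h
        have := A.le_max' _ h
        omega
      have h2 : (f (a+1)).card < a + 1 := by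
        by_contra h
        push_neg at h
        exact h1 (Finset.mem_filter.mpr ⟨Finset.mem_range.mpr (by omega), h⟩)
      have h3 : (f a).card ≤ (f (a+1)).card :=
        Finset.card_le_card (hmono a (a+1) (Nat.le_succ a))
      have hfa : (f a).card = a := by omega
      refine ⟨hfa, fun hwV' => ?_⟩
      have hwin : w ∈ f (a+1) := by
        refine Finset.mem_filter.mpr ⟨hwV', ?_⟩
        rw [hw, hval a han']
        have : (d+1)*(a+1) = (d+1)*a + d + 1 := by ring
        omega
      have h4 : a + 1 ≤ (f (a+1)).card := by
        have hins : insert w (f a) ⊆ f (a+1) :=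
          Finset.insert_subset hwin (hmono a (a+1) (Nat.le_succ a))
        calc a + 1 = (insert w (f a)).card := by
              rw [Finset.card_insert_of_notMem hwout, hfa]
        _ ≤ (f (a+1)).card := Finset.card_le_card hins
      omega
  exact ⟨a, by omega, by rw [hsetc a han']; exact key.1, key.2⟩

end BrauerComb
end

section
/- Let B be a maximal d-Brauer relation on an N-gon with N = (d+1)n+d-1, let X ∈ B be a d-diagonal of the form (i, i+d+(d+1)j), and let Π₁, Π₂ be the two connected components of the polygon minus X. Then the sets B ∩ Π₁ and B ∩ Π₂ of diagonals of B contained in each component have cardinalities j and n-j-1 (in some order). -/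
namespace BrauerComb

namespace Aux

def ICompat (c c' : ℕ × ℕ) : Prop :=
  c.2 < c'.1 ∨ c'.2 < c.1 ∨ (c.1 < c'.1 ∧ c'.2 < c.2) ∨ (c'.1 < c.1 ∧ c.2 < c'.2)

def IGood (d s t : ℕ) (T : Finset (ℕ × ℕ)) : Prop :=
  (∀ c ∈ T, s < c.1 ∧ c.1 < c.2 ∧ c.2 < t ∧ (c.2 - c.1) % (d+1) = d) ∧
  (∀ c ∈ T, ∀ c' ∈ T, c ≠ c' → ICompat c c')

def cov (T : Finset (ℕ × ℕ)) : Finset ℕ := T.sup fun c => Finset.Icc c.1 c.2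

def ASat (d s t : ℕ) (T : Finset (ℕ × ℕ)) : Prop :=
  ∀ x y : ℕ, s < x → x < y → y < t → (y - x) % (d+1) = d →
    (∀ c ∈ T, ICompat (x, y) c) → False


lemma mul_le_of_lt_add {D u v : ℕ} (h : D * u < D * v + D) : D * u ≤ D * v := by
  have h2 : D * u < D * (v + 1) := by rw [Nat.mul_add, Nat.mul_one]; omega
  have h3 := Nat.lt_of_mul_lt_mul_left h2
  exact Nat.mul_le_mul_left _ (by omega)

lemma mem_cov {T : Finset (ℕ × ℕ)} {x : ℕ} :
    x ∈ cov T ↔ ∃ c ∈ T, c.1 ≤ x ∧ x ≤ c.2 := by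
  simp [cov, Finset.mem_sup, Finset.mem_Icc]

lemma IGood.subset {d s t : ℕ} {T T' : Finset (ℕ × ℕ)} (h : IGood d s t T)
    (hsub : T' ⊆ T) : IGood d s t T' :=
  ⟨fun c hc => h.1 c (hsub hc), fun c hc c' hc' => h.2 c (hsub hc) c' (hsub hc')⟩

lemma cov_subset {d s t : ℕ} {T : Finset (ℕ × ℕ)} (h : IGood d s t T) :
    cov T ⊆ Finset.Ioo s t := by
  intro x hx
  obtain ⟨c, hc, h1, h2⟩ := mem_cov.1 hx
  have := h.1 c hc
  simp only [Finset.mem_Ioo]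
  omega

/-- leftmost chord -/
lemma exists_leftmost {d s t : ℕ} {T : Finset (ℕ × ℕ)} (hT : IGood d s t T)
    (hne : T.Nonempty) :
    ∃ c₀ ∈ T, ∀ c ∈ T, c ≠ c₀ → (c₀.2 < c.1 ∨ (c₀.1 < c.1 ∧ c.2 < c₀.2)) := by
  obtain ⟨c₀, hc₀, hmin⟩ := T.exists_min_image (fun c => c.1) hne
  refine ⟨c₀, hc₀, fun c hc hne' => ?_⟩
  have h1 := hT.2 c₀ hc₀ c hc (Ne.symm hne')
  have h2 := hmin c hc
  have h3 := (hT.1 c hc).2.1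
  have h4 := (hT.1 c₀ hc₀).2.1
  rcases h1 with h | h | h | h <;> omega

lemma decomp_card {d s t : ℕ} {T : Finset (ℕ × ℕ)} (hT : IGood d s t T) {c₀ : ℕ × ℕ}
    (hc₀ : c₀ ∈ T)
    (hleft : ∀ c ∈ T, c ≠ c₀ → (c₀.2 < c.1 ∨ (c₀.1 < c.1 ∧ c.2 < c₀.2))) :
    T.card = 1 + (T.filter fun c => c₀.1 < c.1 ∧ c.2 < c₀.2).card
      + (T.filter fun c => c₀.2 < c.1).card := by
  classical
  set Tin := T.filter fun c => c₀.1 < c.1 ∧ c.2 < c₀.2 with hTin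
  set Tr := T.filter fun c => c₀.2 < c.1 with hTr
  have hd1 : Disjoint Tin Tr := by
    rw [Finset.disjoint_left]
    intro c hc hc'
    simp only [hTin, hTr, Finset.mem_filter] at hc hc'
    have := (hT.1 c hc.1).2.1
    omega
  have hc₀in : c₀ ∉ Tin ∪ Tr := by
    simp only [Finset.mem_union, hTin, hTr, Finset.mem_filter]
    have := (hT.1 c₀ hc₀).2.1
    omega
  have hTeq : T = insert c₀ (Tin ∪ Tr) := by
    ext c
    simp only [Finset.mem_insert, Finset.mem_union, hTin, hTr, Finset.mem_filter]
    constructor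
    · intro hc
      by_cases hcc : c = c₀
      · exact Or.inl hcc
      · rcases hleft c hc hcc with h | h
        · exact Or.inr (Or.inr ⟨hc, h⟩)
        · exact Or.inr (Or.inl ⟨hc, h⟩)
    · rintro (rfl | ⟨h, _⟩ | ⟨h, _⟩) <;> [exact hc₀; exact h; exact h]
  rw [hTeq, Finset.card_insert_of_notMem hc₀in, Finset.card_union_of_disjoint hd1]
  ring

lemma decomp_cov {d s t : ℕ} {T : Finset (ℕ × ℕ)} (hT : IGood d s t T) {c₀ : ℕ × ℕ}
    (hc₀ : c₀ ∈ T)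
    (hleft : ∀ c ∈ T, c ≠ c₀ → (c₀.2 < c.1 ∨ (c₀.1 < c.1 ∧ c.2 < c₀.2))) :
    (cov T).card = (c₀.2 - c₀.1 + 1) + (cov (T.filter fun c => c₀.2 < c.1)).card := by
  classical
  set Tr := T.filter fun c => c₀.2 < c.1 with hTr
  have hcov : cov T = Finset.Icc c₀.1 c₀.2 ∪ cov Tr := by
    ext x
    simp only [Finset.mem_union, mem_cov, Finset.mem_Icc]
    constructor
    · rintro ⟨c, hc, h1, h2⟩
      by_cases hcc : c = c₀
      · subst hcc; exact Or.inl ⟨h1, h2⟩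
      · rcases hleft c hc hcc with h | h
        · exact Or.inr ⟨c, by simp [hTr, Finset.mem_filter, hc, h], h1, h2⟩
        · exact Or.inl ⟨by omega, by omega⟩
    · rintro (⟨h1, h2⟩ | ⟨c, hc, h1, h2⟩)
      · exact ⟨c₀, hc₀, h1, h2⟩
      · simp only [hTr, Finset.mem_filter] at hc
        exact ⟨c, hc.1, h1, h2⟩
  have hdisj : Disjoint (Finset.Icc c₀.1 c₀.2) (cov Tr) := by
    rw [Finset.disjoint_left]
    intro x hx hx'
    obtain ⟨c, hc, h1, h2⟩ := mem_cov.1 hx'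
    simp only [hTr, Finset.mem_filter] at hc
    simp only [Finset.mem_Icc] at hx
    omega
  rw [hcov, Finset.card_union_of_disjoint hdisj, Nat.card_Icc]
  have := (hT.1 c₀ hc₀).2.1
  omega

lemma cov_card_mod {d s t : ℕ} (T : Finset (ℕ × ℕ)) (hT : IGood d s t T) :
    (cov T).card % (d+1) = 0 := by
  classical
  induction T using Finset.strongInduction with
  | _ T ih =>
    rcases T.eq_empty_or_nonempty with rfl | hne
    · simp [cov]
    · obtain ⟨c₀, hc₀, hleft⟩ := exists_leftmost hT hne
      set Tr := T.filter fun c => c₀.2 < c.1 with hTr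
      have hTrss : Tr ⊂ T := by
        refine Finset.filter_ssubset.2 ⟨c₀, hc₀, ?_⟩
        have := (hT.1 c₀ hc₀).2.1; omega
      have hrec := ih Tr hTrss (hT.subset hTrss.subset)
      have hcov := decomp_cov hT hc₀ hleft
      have hres := (hT.1 c₀ hc₀).2.2.2
      have h1 : c₀.2 - c₀.1 = (d+1) * ((c₀.2 - c₀.1)/(d+1)) + d := by
        have := Nat.div_add_mod (c₀.2 - c₀.1) (d+1); omega
      have h2 : (cov Tr).card = (d+1) * ((cov Tr).card / (d+1)) := by
        have := Nat.div_add_mod (cov Tr).card (d+1); omega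
      rw [hcov, h2, h1]
      have : (d+1) * ((c₀.2 - c₀.1)/(d+1)) + d + 1 + (d+1) * ((cov Tr).card / (d+1))
          = (d+1) * ((c₀.2 - c₀.1)/(d+1) + 1 + (cov Tr).card / (d+1)) := by ring
      rw [this, Nat.mul_mod_right]

lemma upper_bound {d s t : ℕ} (T : Finset (ℕ × ℕ)) (hT : IGood d s t T) :
    (d+1) * T.card ≤ (cov T).card := by
  classical
  induction T using Finset.strongInduction with
  | _ T ih =>
    rcases T.eq_empty_or_nonempty with rfl | hne
    · simp
    · obtain ⟨c₀, hc₀, hleft⟩ := exists_leftmost hT hne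
      set Tin := T.filter fun c => c₀.1 < c.1 ∧ c.2 < c₀.2 with hTin
      set Tr := T.filter fun c => c₀.2 < c.1 with hTr
      have hb := (hT.1 c₀ hc₀).2.1
      have hTinss : Tin ⊂ T := by
        refine Finset.filter_ssubset.2 ⟨c₀, hc₀, ?_⟩; omega
      have hTrss : Tr ⊂ T := by
        refine Finset.filter_ssubset.2 ⟨c₀, hc₀, ?_⟩; omega
      have hin := ih Tin hTinss (hT.subset hTinss.subset)
      have hr := ih Tr hTrss (hT.subset hTrss.subset)
      -- cov Tin inside Ioo c₀.1 c₀.2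
      have hcovin : cov Tin ⊆ Finset.Ioo c₀.1 c₀.2 := by
        intro x hx
        obtain ⟨c, hc, h1, h2⟩ := mem_cov.1 hx
        simp only [hTin, Finset.mem_filter] at hc
        simp only [Finset.mem_Ioo]; omega
      have hcin : (cov Tin).card ≤ c₀.2 - c₀.1 - 1 := by
        have := Finset.card_le_card hcovin
        rwa [Nat.card_Ioo] at this
      have hmodin := cov_card_mod Tin (hT.subset hTinss.subset)
      have hres := (hT.1 c₀ hc₀).2.2.2
      -- so cov Tin ≤ (c₀.2 - c₀.1 + 1) - (d+1)
      have hcin' : (cov Tin).card + (d + 1) ≤ c₀.2 - c₀.1 + 1 := by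
        obtain ⟨u, hu⟩ := Nat.dvd_of_mod_eq_zero hmodin
        obtain ⟨w, hw⟩ : ∃ w, c₀.2 - c₀.1 = (d+1) * w + d :=
          ⟨(c₀.2 - c₀.1)/(d+1), by have := Nat.div_add_mod (c₀.2 - c₀.1) (d+1); omega⟩
        have h5 : (d+1) * u < (d+1) * w + (d+1) := by omega
        have h6 := mul_le_of_lt_add h5
        omega
      have hcard := decomp_card hT hc₀ hleft
      have hcov := decomp_cov hT hc₀ hleft
      rw [← hTin, ← hTr] at hcard
      rw [← hTr] at hcov
      have expand : (d+1) * T.card = (d+1) + (d+1) * Tin.card + (d+1) * Tr.card := by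
        rw [hcard]; ring
      omega


lemma rank_attain : ∀ (k : ℕ) (F : Finset ℕ), k < F.card →
    ∃ y ∈ F, (F.filter (· < y)).card = k := by
  intro k
  induction k with
  | zero =>
    intro F hF
    obtain ⟨m, hm, hmin⟩ := F.exists_min_image id (Finset.card_pos.1 (by omega))
    refine ⟨m, hm, ?_⟩
    rw [Finset.card_eq_zero, Finset.eq_empty_iff_forall_notMem]
    intro x hx
    simp only [Finset.mem_filter] at hx
    have := hmin x hx.1
    simp only [id] at this
    omega
  | succ k ih =>
    intro F hF
    obtain ⟨m, hm, hmin⟩ := F.exists_min_image id (Finset.card_pos.1 (by omega))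
    have hcard : k < (F.erase m).card := by
      rw [Finset.card_erase_of_mem hm]; omega
    obtain ⟨y, hy, hyc⟩ := ih (F.erase m) hcard
    refine ⟨y, Finset.mem_of_mem_erase hy, ?_⟩
    have hmy : m < y := by
      have h1 := hmin y (Finset.mem_of_mem_erase hy)
      have h2 := Finset.ne_of_mem_erase hy
      simp only [id] at h1
      omega
    have heq : F.filter (· < y) = insert m ((F.erase m).filter (· < y)) := by
      ext x
      simp only [Finset.mem_filter, Finset.mem_insert, Finset.mem_erase]
      constructor
      · intro ⟨h1, h2⟩
        by_cases hxm : x = m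
        · exact Or.inl hxm
        · exact Or.inr ⟨⟨hxm, h1⟩, h2⟩
      · rintro (rfl | ⟨⟨_, h1⟩, h2⟩)
        · exact ⟨hm, hmy⟩
        · exact ⟨h1, h2⟩
    rw [heq, Finset.card_insert_of_notMem (by simp)]
    omega

lemma free_le {d s t : ℕ} {T : Finset (ℕ × ℕ)} (hd : 1 ≤ d) (hT : IGood d s t T)
    (hS : ASat d s t T) : ((Finset.Ioo s t) \ cov T).card ≤ d := by
  classical
  by_contra hcon
  push_neg at hcon
  set F := (Finset.Ioo s t) \ cov T with hF
  obtain ⟨x, hx, hx0⟩ := rank_attain 0 F (by omega)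
  obtain ⟨y, hy, hyd⟩ := rank_attain d F (by omega)
  have hxF : x ∈ Finset.Ioo s t ∧ x ∉ cov T := by
    simpa [hF, Finset.mem_sdiff] using hx
  have hyF : y ∈ Finset.Ioo s t ∧ y ∉ cov T := by
    simpa [hF, Finset.mem_sdiff] using hy
  simp only [Finset.mem_Ioo] at hxF hyF
  have hxy : x < y := by
    rcases lt_trichotomy x y with h | h | h
    · exact h
    · exfalso; rw [h] at hx0; omega
    · exfalso
      have : x ∈ F.filter (· < x) := by
        exfalso
        have : y ∈ F.filter (· < x) := Finset.mem_filter.2 ⟨hy, h⟩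
        have h2 : (F.filter (· < x)).card ≠ 0 := Finset.card_ne_zero_of_mem this
        omega
      exact absurd this (by simp [Finset.mem_filter])
  have hemp : F.filter (· < x) = ∅ := Finset.card_eq_zero.1 hx0
  -- free strictly between x and y counted
  have hfree_between : (F.filter (fun z => x < z ∧ z < y)).card = d - 1 := by
    have heq : F.filter (fun z => x < z ∧ z < y) = (F.filter (· < y)).erase x := by
      ext z
      simp only [Finset.mem_filter, Finset.mem_erase]
      constructor
      · intro ⟨h1, h2, h3⟩; exact ⟨by omega, h1, h3⟩
      · intro ⟨h1, h2, h3⟩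
        refine ⟨h2, ?_, h3⟩
        rcases lt_trichotomy z x with h | h | h
        · exfalso
          have : z ∈ F.filter (· < x) := Finset.mem_filter.2 ⟨h2, h⟩
          rw [hemp] at this; exact absurd this (Finset.notMem_empty z)
        · exact absurd h h1
        · exact h
    have hxmem : x ∈ F.filter (· < y) := Finset.mem_filter.2 ⟨hx, hxy⟩
    rw [heq, Finset.card_erase_of_mem hxmem, hyd]
  -- covered part between x and y
  set T' := T.filter (fun c => x < c.1 ∧ c.2 < y) with hT'
  have hcovpart : (Finset.Ioo x y).filter (· ∈ cov T) = cov T' := by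
    ext z
    simp only [Finset.mem_filter, Finset.mem_Ioo]
    constructor
    · intro ⟨⟨h1, h2⟩, h3⟩
      obtain ⟨c, hc, hc1, hc2⟩ := mem_cov.1 h3
      have hxn : ¬ (c.1 ≤ x ∧ x ≤ c.2) := fun h => hxF.2 (mem_cov.2 ⟨c, hc, h.1, h.2⟩)
      have hyn : ¬ (c.1 ≤ y ∧ y ≤ c.2) := fun h => hyF.2 (mem_cov.2 ⟨c, hc, h.1, h.2⟩)
      refine mem_cov.2 ⟨c, Finset.mem_filter.2 ⟨hc, ?_, ?_⟩, hc1, hc2⟩ <;> omega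
    · intro hz
      obtain ⟨c, hc, hc1, hc2⟩ := mem_cov.1 hz
      simp only [hT', Finset.mem_filter] at hc
      exact ⟨⟨by omega, by omega⟩, mem_cov.2 ⟨c, hc.1, hc1, hc2⟩⟩
  have hmodT' := cov_card_mod T' (hT.subset (Finset.filter_subset _ _))
  -- partition of Ioo x y
  have hpart : (Finset.Ioo x y).card =
      (F.filter (fun z => x < z ∧ z < y)).card + ((Finset.Ioo x y).filter (· ∈ cov T)).card := by
    rw [← Finset.card_union_of_disjoint]
    · congr 1
      ext z
      simp only [Finset.mem_union, Finset.mem_filter, hF, Finset.mem_sdiff, Finset.mem_Ioo]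
      constructor
      · intro ⟨h1, h2⟩
        by_cases hz : z ∈ cov T
        · exact Or.inr ⟨⟨h1, h2⟩, hz⟩
        · exact Or.inl ⟨⟨⟨by omega, by omega⟩, hz⟩, h1, h2⟩
      · rintro (⟨⟨_, _⟩, h1, h2⟩ | ⟨⟨h1, h2⟩, _⟩) <;> exact ⟨h1, h2⟩
    · rw [Finset.disjoint_left]
      intro z hz hz'
      simp only [Finset.mem_filter, hF, Finset.mem_sdiff] at hz hz'
      exact hz.1.2 hz'.2
  rw [Nat.card_Ioo] at hpart
  obtain ⟨u, hu⟩ := Nat.dvd_of_mod_eq_zero hmodT'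
  rw [hcovpart, hu] at hpart
  -- (y - x) % (d+1) = d
  have hyx : y - x = d + (d+1) * u := by omega
  have hmod : (y - x) % (d+1) = d := by
    rw [hyx, Nat.add_mul_mod_self_left, Nat.mod_eq_of_lt (by omega)]
  refine hS x y hxF.1.1 hxy hyF.1.2 hmod ?_
  intro c hc
  have hb := hT.1 c hc
  have hxn : ¬ (c.1 ≤ x ∧ x ≤ c.2) := fun h => hxF.2 (mem_cov.2 ⟨c, hc, h.1, h.2⟩)
  have hyn : ¬ (c.1 ≤ y ∧ y ≤ c.2) := fun h => hyF.2 (mem_cov.2 ⟨c, hc, h.1, h.2⟩)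
  simp only [ICompat]
  omega

lemma lower_bound {d : ℕ} (hd : 1 ≤ d) : ∀ (V s t : ℕ) (T : Finset (ℕ × ℕ)), t ≤ s + V →
    IGood d s t T → ASat d s t T → (cov T).card ≤ (d+1) * T.card := by
  intro V
  induction V with
  | zero =>
    intro s t T hV hG hS
    have hemp : T = ∅ := Finset.eq_empty_of_forall_notMem fun c hc => by
      have := hG.1 c hc; omega
    simp [hemp, cov]
  | succ V ih =>
    intro s t T hV hG hS
    rcases T.eq_empty_or_nonempty with rfl | hne
    · simp [cov]
    obtain ⟨c₀, hc₀, hleft⟩ := exists_leftmost hG hne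
    classical
    set Tin := T.filter (fun c => c₀.1 < c.1 ∧ c.2 < c₀.2) with hTin
    set Tr := T.filter (fun c => c₀.2 < c.1) with hTr
    have hb := hG.1 c₀ hc₀
    have hGin : IGood d c₀.1 c₀.2 Tin := by
      constructor
      · intro c hc
        simp only [hTin, Finset.mem_filter] at hc
        have := hG.1 c hc.1
        exact ⟨hc.2.1, this.2.1, hc.2.2, this.2.2.2⟩
      · intro c hc c' hc'
        simp only [hTin, Finset.mem_filter] at hc hc'
        exact hG.2 c hc.1 c' hc'.1
    have hGr : IGood d c₀.2 t Tr := by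
      constructor
      · intro c hc
        simp only [hTr, Finset.mem_filter] at hc
        have := hG.1 c hc.1
        exact ⟨hc.2, this.2.1, this.2.2.1, this.2.2.2⟩
      · intro c hc c' hc'
        simp only [hTr, Finset.mem_filter] at hc hc'
        exact hG.2 c hc.1 c' hc'.1
    have hSin : ASat d c₀.1 c₀.2 Tin := by
      intro x y h1 h2 h3 h4 hcomp
      refine hS x y (by omega) h2 (by omega) h4 ?_
      intro c hc
      by_cases hcc : c = c₀
      · subst hcc
        simp only [ICompat]
        omega
      · rcases hleft c hc hcc with h | h
        · simp only [ICompat]; omega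
        · exact hcomp c (by simp only [hTin, Finset.mem_filter]; exact ⟨hc, h⟩)
    have hSr : ASat d c₀.2 t Tr := by
      intro x y h1 h2 h3 h4 hcomp
      refine hS x y (by omega) h2 h3 h4 ?_
      intro c hc
      by_cases hcc : c = c₀
      · subst hcc
        simp only [ICompat]
        omega
      · rcases hleft c hc hcc with h | h
        · exact hcomp c (by simp only [hTr, Finset.mem_filter]; exact ⟨hc, h⟩)
        · have := (hG.1 c hc).2.1
          simp only [ICompat]
          omega
    have hin := ih c₀.1 c₀.2 Tin (by omega) hGin hSin
    have hr := ih c₀.2 t Tr (by omega) hGr hSr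
    -- covered inside c₀ is big
    have hfreein := free_le hd hGin hSin
    have hsplitin := Finset.card_sdiff_add_card_eq_card (cov_subset hGin)
    rw [Nat.card_Ioo] at hsplitin
    obtain ⟨u, hu⟩ := Nat.dvd_of_mod_eq_zero (cov_card_mod Tin hGin)
    obtain ⟨w, hw⟩ : ∃ w, c₀.2 - c₀.1 = (d+1) * w + d := by
      refine ⟨(c₀.2 - c₀.1)/(d+1), ?_⟩
      have h7 := Nat.div_add_mod (c₀.2 - c₀.1) (d+1)
      have h8 := hb.2.2.2
      omega
    have h5 : (d+1) * w < (d+1) * u + (d+1) := by omega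
    have h6 := mul_le_of_lt_add h5
    have hcard := decomp_card hG hc₀ hleft
    have hcov := decomp_cov hG hc₀ hleft
    rw [← hTin, ← hTr] at hcard
    rw [← hTr] at hcov
    have expand : (d+1) * T.card = (d+1) + (d+1) * Tin.card + (d+1) * Tr.card := by
      rw [hcard]; ring
    omega

theorem interval_count {d K s t : ℕ} (hd : 1 ≤ d) (T : Finset (ℕ × ℕ))
    (hG : IGood d s t T) (hS : ASat d s t T) (hst : t = s + ((d+1)*K + d)) :
    T.card = K := by
  have hub := upper_bound T hG
  have hlb := lower_bound hd (t - s) s t T (by omega) hG hS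
  have hcovsub := Finset.card_le_card (cov_subset hG)
  rw [Nat.card_Ioo] at hcovsub
  have hmod := cov_card_mod T hG
  have hfree := free_le hd hG hS
  have hsplit := Finset.card_sdiff_add_card_eq_card (cov_subset hG)
  rw [Nat.card_Ioo] at hsplit
  obtain ⟨u, hu⟩ := Nat.dvd_of_mod_eq_zero hmod
  have h1 : (d+1)*u ≤ (d+1)*K := mul_le_of_lt_add (by omega)
  have h2 : (d+1)*K ≤ (d+1)*u := mul_le_of_lt_add (by omega)
  have h3 : (d+1) * T.card ≤ (d+1) * K := by omega
  have h4 : (d+1) * K ≤ (d+1) * T.card := by omega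
  have h5 := Nat.le_of_mul_le_mul_left h3 (by omega)
  have h6 := Nat.le_of_mul_le_mul_left h4 (by omega)
  omega

section ZModGlue

variable {N : ℕ}

def Ech (a : ZMod N) (u v : ℕ) : Sym2 (ZMod N) := s(a + (u : ZMod N), a + (v : ZMod N))

lemma natCast_mod_self (x : ℕ) : ((x % N : ℕ) : ZMod N) = (x : ZMod N) := by
  conv_rhs => rw [← Nat.mod_add_div x N]
  push_cast [ZMod.natCast_self]
  ring

lemma addCast_inj [NeZero N] (a : ZMod N) {u v : ℕ} (hu : u < N) (hv : v < N) :
    a + (u : ZMod N) = a + (v : ZMod N) ↔ u = v := by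
  constructor
  · intro h
    have h2 : (u : ZMod N) = (v : ZMod N) := by exact add_left_cancel h
    have h3 := congrArg ZMod.val h2
    rwa [ZMod.val_natCast, ZMod.val_natCast, Nat.mod_eq_of_lt hu, Nat.mod_eq_of_lt hv] at h3
  · rintro rfl; rfl

lemma sub_add_val [NeZero N] (a : ZMod N) {u w : ℕ} (hu : u < N) (hw : w < N) :
    ((a + (w : ZMod N)) - (a + (u : ZMod N))).val
      = if u ≤ w then w - u else w + N - u := by
  have h1 : (a + (w : ZMod N)) - (a + (u : ZMod N)) = ((w + (N - u) : ℕ) : ZMod N) := by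
    push_cast [Nat.cast_sub hu.le, ZMod.natCast_self]
    ring
  rw [h1, ZMod.val_natCast]
  rcases le_or_gt u w with h | h
  · have h2 : w + (N - u) = (w - u) + N := by omega
    rw [h2, Nat.add_mod_right, Nat.mod_eq_of_lt (by omega), if_pos h]
  · have hlt : w + (N - u) < N := by omega
    rw [Nat.mod_eq_of_lt hlt, if_neg (by omega)]
    omega

lemma bet_iff [NeZero N] (a : ZMod N) {u v w : ℕ} (hu : u < N) (hv : v < N) (hw : w < N) :
    Between (a + (u : ZMod N)) (a + (v : ZMod N)) (a + (w : ZMod N)) ↔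
      (w ≠ u ∧ (if u ≤ w then w - u else w + N - u) < (if u ≤ v then v - u else v + N - u)) := by
  unfold Between
  rw [sub_add_val a hu hw, sub_add_val a hu hv]
  split_ifs <;> omega

lemma not_crosses [NeZero N] (a : ZMod N) {u v w z : ℕ} (hu : u < N) (hv : v < N)
    (hw : w < N) (hz : z < N) (huv : u < v) (hwz : w < z)
    (h1 : w ≠ u) (h2 : w ≠ v) (h3 : z ≠ u) (h4 : z ≠ v)
    (hcond : (u < w ∧ w < v) ↔ (u < z ∧ z < v)) :
    ¬ Crosses (Ech a u v) (Ech a w z) := by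
  rintro ⟨α, β, γ, ε, hab, hce, hxor⟩
  rw [Ech, Sym2.eq_iff] at hab hce
  rcases hab with ⟨rfl, rfl⟩ | ⟨rfl, rfl⟩ <;> rcases hce with ⟨rfl, rfl⟩ | ⟨rfl, rfl⟩
  · rw [bet_iff a hu hv hw, bet_iff a hu hv hz] at hxor
    unfold Xor' at hxor; rw [xor_def] at hxor
    split_ifs at hxor <;> omega
  · rw [bet_iff a hu hv hz, bet_iff a hu hv hw] at hxor
    unfold Xor' at hxor; rw [xor_def] at hxor
    split_ifs at hxor <;> omega
  · rw [bet_iff a hv hu hw, bet_iff a hv hu hz] at hxor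
    unfold Xor' at hxor; rw [xor_def] at hxor
    split_ifs at hxor <;> omega
  · rw [bet_iff a hv hu hz, bet_iff a hv hu hw] at hxor
    unfold Xor' at hxor; rw [xor_def] at hxor
    split_ifs at hxor <;> omega

lemma crosses_of [NeZero N] (a : ZMod N) {u v w z : ℕ} (hu : u < N) (hv : v < N)
    (hw : w < N) (hz : z < N) (h : u < w ∧ w < v ∧ v < z) :
    Crosses (Ech a u v) (Ech a w z) := by
  refine ⟨a + (u : ZMod N), a + (v : ZMod N), a + (w : ZMod N), a + (z : ZMod N), rfl, rfl, ?_⟩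
  left
  constructor
  · rw [bet_iff a hu hv hw]; split_ifs <;> omega
  · rw [bet_iff a hu hv hz]; split_ifs <;> omega

lemma vert_disj [NeZero N] (a : ZMod N) {u v w z : ℕ} (hu : u < N) (hv : v < N)
    (hw : w < N) (hz : z < N) (h1 : u ≠ w) (h2 : u ≠ z) (h3 : v ≠ w) (h4 : v ≠ z) :
    ∀ x : ZMod N, ¬ (x ∈ Ech a u v ∧ x ∈ Ech a w z) := by
  rintro x ⟨m1, m2⟩
  rw [Ech, Sym2.mem_iff] at m1 m2
  rcases m1 with rfl | rfl <;> rcases m2 with h | h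
  · exact h1 ((addCast_inj a hu hw).1 h)
  · exact h2 ((addCast_inj a hu hz).1 h)
  · exact h3 ((addCast_inj a hv hw).1 h)
  · exact h4 ((addCast_inj a hv hz).1 h)

end ZModGlue

lemma side_count {d n N : ℕ} (hd : 1 ≤ d) (hn : 0 < n)
    (hN : N = (d + 1) * n + d - 1) {B : Set (Sym2 (ZMod N))}
    (hB : IsMaxBrauer d n B) (a : ZMod N) {j : ℕ} (hj : j ≤ n - 1)
    (hX : s(a, a + ((d + (d + 1) * j : ℕ) : ZMod N)) ∈ B)
    (s t K : ℕ)
    (hside : (s = 0 ∧ t = d + (d + 1) * j) ∨ (s = d + (d + 1) * j ∧ t = N))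
    (hK : t = s + ((d + 1) * K + d)) (hKn : K ≤ n - 1)
    (P : ZMod N → Prop)
    (hP : ∀ w : ℕ, w < N → (P (a + (w : ZMod N)) ↔ (s < w ∧ w < t))) :
    {Y | Y ∈ B ∧ ∀ v ∈ Y, P v}.ncard = K := by
  classical
  obtain ⟨k, rfl⟩ : ∃ k, n = k + 1 := ⟨n - 1, by omega⟩
  have hjk : j ≤ k := by simpa using hj
  have hKk : K ≤ k := by simpa using hKn
  have hkexp : (d+1)*(k+1) = (d+1)*k + (d+1) := by ring
  have hNval : N = (d+1)*k + 2*d := by omega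
  haveI : NeZero N := ⟨by omega⟩
  set L := d + (d+1)*j with hL
  have hLexp : (d+1)*j ≤ (d+1)*k := Nat.mul_le_mul_left _ hjk
  have hLN : L < N := by omega
  have h0L : 0 < L := by omega
  have hst : s < t := by omega
  have htN : t ≤ N := by rcases hside with ⟨_, h⟩ | ⟨_, h⟩ <;> omega
  have hXE : Ech a 0 L ∈ B := by
    have : Ech a 0 L = s(a, a + ((L : ℕ) : ZMod N)) := by simp [Ech]
    rw [this]; exact hX
  -- representation of vertices
  have hrep : ∀ v : ZMod N, ∃ w, w < N ∧ v = a + (w : ZMod N) := by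
    intro v
    refine ⟨(v - a).val, ZMod.val_lt _, ?_⟩
    rw [ZMod.natCast_val, ZMod.cast_id]
    ring
  -- every member of B is Ech a p q with a d-residue gap
  have hdiag : ∀ Y ∈ B, ∃ p q, p < q ∧ q < N ∧ (q - p) % (d+1) = d ∧ Y = Ech a p q := by
    intro Y hY
    obtain ⟨c, m, hm, rfl⟩ := hB.1.1 Y hY
    have hmk : m ≤ k := by simpa using hm
    set δ := d + (d+1)*m with hδ
    have hmexp : (d+1)*m ≤ (d+1)*k := Nat.mul_le_mul_left _ hmk
    have hδN : δ < N := by omega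
    have hδ0 : 0 < δ := by omega
    obtain ⟨p, hp, hpe⟩ := hrep c
    have he : c + ((δ : ℕ) : ZMod N) = a + (((p + δ) % N : ℕ) : ZMod N) := by
      rw [hpe, natCast_mod_self]
      push_cast
      ring
    set q := (p + δ) % N with hq
    have hqN : q < N := Nat.mod_lt _ (by omega)
    have hcase : q = p + δ ∨ (N ≤ p + δ ∧ q = p + δ - N) := by
      rcases Nat.lt_or_ge (p + δ) N with h | h
      · left; rw [hq, Nat.mod_eq_of_lt h]
      · right
        refine ⟨h, ?_⟩
        rw [hq, Nat.mod_eq_sub_mod h, Nat.mod_eq_of_lt (by omega)]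
    have hres : δ % (d+1) = d := by
      rw [hδ, Nat.add_mul_mod_self_left, Nat.mod_eq_of_lt (by omega)]
    rcases hcase with h | ⟨hge, h⟩
    · refine ⟨p, q, by omega, hqN, ?_, ?_⟩
      · rw [show q - p = δ by omega]; exact hres
      · rw [he, hpe, Ech]
    · -- wrapped case
      have hne : q ≠ p := by
        intro hqp
        omega
      have hqp : q < p := by omega
      refine ⟨q, p, hqp, by omega, ?_, ?_⟩
      · have e1 : (d+1)*(k - m) + (d+1)*m = (d+1)*k := by
          rw [← Nat.mul_add]
          congr 1
          omega
        have e2 : p - q = d + (d+1)*(k - m) := by omega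
        rw [e2, Nat.add_mul_mod_self_left, Nat.mod_eq_of_lt (by omega)]
      · rw [he, hpe, Ech]
        exact Sym2.eq_swap
  -- injectivity of representation
  have hEinj : ∀ p q p' q' : ℕ, p < q → q < N → p' < q' → q' < N →
      Ech a p q = Ech a p' q' → p = p' ∧ q = q' := by
    intro p q p' q' h1 h2 h3 h4 h5
    rw [Ech, Ech, Sym2.eq_iff] at h5
    rcases h5 with ⟨e1, e2⟩ | ⟨e1, e2⟩
    · exact ⟨(addCast_inj a (by omega) (by omega)).1 e1, (addCast_inj a h2 h4).1 e2⟩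
    · have f1 := (addCast_inj a (by omega) h4).1 e1
      have f2 := (addCast_inj a h2 (by omega)).1 e2
      omega
  -- side split of members
  have hsplit : ∀ Y ∈ B, Y ≠ Ech a 0 L → ∃ p q, p < q ∧ q < N ∧
      (q - p) % (d+1) = d ∧ Y = Ech a p q ∧ ((0 < p ∧ q < L) ∨ L < p) := by
    intro Y hY hYX
    obtain ⟨p, q, hpq, hqN, hres, rfl⟩ := hdiag Y hY
    have hdd := hB.1.2 _ hXE _ hY (Ne.symm hYX)
    have hp0 : p ≠ 0 := by
      rintro rfl
      refine hdd.1 a ⟨?_, ?_⟩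
      · rw [Ech, Sym2.mem_iff]; left; simp
      · rw [Ech, Sym2.mem_iff]; left; simp
    have hpL : p ≠ L := by
      rintro rfl
      refine hdd.1 (a + ((L : ℕ) : ZMod N)) ⟨?_, ?_⟩
      · rw [Ech, Sym2.mem_iff]; right; rfl
      · rw [Ech, Sym2.mem_iff]; left; rfl
    have hqL : q ≠ L := by
      rintro rfl
      refine hdd.1 (a + ((L : ℕ) : ZMod N)) ⟨?_, ?_⟩
      · rw [Ech, Sym2.mem_iff]; right; rfl
      · rw [Ech, Sym2.mem_iff]; right; rfl
    refine ⟨p, q, hpq, hqN, hres, rfl, ?_⟩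
    by_cases hcase : q < L
    · left; omega
    · by_cases hcase2 : L < p
      · right; exact hcase2
      · exfalso
        refine hdd.2 (crosses_of a (by omega) hLN (by omega) hqN ?_)
        omega
  -- the finset of chords on this side
  set T : Finset (ℕ × ℕ) := ((Finset.range N) ×ˢ (Finset.range N)).filter
      (fun c => s < c.1 ∧ c.1 < c.2 ∧ c.2 < t ∧ Ech a c.1 c.2 ∈ B) with hT
  have hmemT : ∀ p q : ℕ, ((p, q) ∈ T ↔ (s < p ∧ p < q ∧ q < t ∧ Ech a p q ∈ B)) := by
    intro p q
    rw [hT, Finset.mem_filter, Finset.mem_product, Finset.mem_range, Finset.mem_range]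
    constructor
    · rintro ⟨_, h⟩; exact h
    · intro h; exact ⟨⟨by omega, by omega⟩, h⟩
  -- IGood
  have hGood : IGood d s t T := by
    constructor
    · rintro ⟨p, q⟩ hc
      rw [hmemT] at hc
      obtain ⟨p', q', h1, h2, h3, h4⟩ := hdiag _ hc.2.2.2
      obtain ⟨rfl, rfl⟩ := hEinj p' q' p q h1 h2 hc.2.1 (by omega) h4.symm
      exact ⟨hc.1, hc.2.1, hc.2.2.1, h3⟩
    · rintro ⟨p, q⟩ hc ⟨p', q'⟩ hc' hne
      rw [hmemT] at hc hc'
      have hqN' : q < N := by omega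
      have hq'N : q' < N := by omega
      have hYne : Ech a p q ≠ Ech a p' q' := by
        intro h
        obtain ⟨rfl, rfl⟩ := hEinj p q p' q' hc.2.1 hqN' hc'.2.1 hq'N h
        exact hne rfl
      have hdd := hB.1.2 _ hc.2.2.2 _ hc'.2.2.2 hYne
      have hdd' := hB.1.2 _ hc'.2.2.2 _ hc.2.2.2 hYne.symm
      have hvd : ∀ u w : ℕ, u < N → w < N → (a + (u : ZMod N) ∈ Ech a p q) →
          (a + (w : ZMod N) ∈ Ech a p' q') → a + (u : ZMod N) = a + (w : ZMod N) → u = w := by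
        intro u w hu hw _ _ h
        exact (addCast_inj a hu hw).1 h
      have d1 : p ≠ p' := by
        intro h
        exact hdd.1 (a + (p : ZMod N)) ⟨by rw [Ech, Sym2.mem_iff]; left; rfl,
          by rw [h, Ech, Sym2.mem_iff]; left; rfl⟩
      have d2 : p ≠ q' := by
        intro h
        exact hdd.1 (a + (p : ZMod N)) ⟨by rw [Ech, Sym2.mem_iff]; left; rfl,
          by rw [h, Ech, Sym2.mem_iff]; right; rfl⟩
      have d3 : q ≠ p' := by
        intro h
        exact hdd.1 (a + (q : ZMod N)) ⟨by rw [Ech, Sym2.mem_iff]; right; rfl,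
          by rw [h, Ech, Sym2.mem_iff]; left; rfl⟩
      have d4 : q ≠ q' := by
        intro h
        exact hdd.1 (a + (q : ZMod N)) ⟨by rw [Ech, Sym2.mem_iff]; right; rfl,
          by rw [h, Ech, Sym2.mem_iff]; right; rfl⟩
      have x1 : ¬ (p < p' ∧ p' < q ∧ q < q') := by
        rintro ⟨e1, e2, e3⟩
        exact hdd.2 (crosses_of a (by omega) hqN' (by omega) hq'N ⟨e1, e2, e3⟩)
      have x2 : ¬ (p' < p ∧ p < q' ∧ q' < q) := by
        rintro ⟨e1, e2, e3⟩
        exact hdd'.2 (crosses_of a (by omega) hq'N (by omega) hqN' ⟨e1, e2, e3⟩)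
      simp only [ICompat]
      omega
  -- ASat
  have hSat : ASat d s t T := by
    intro x y hsx hxy hyt hres hcomp
    have hxN : x < N := by omega
    have hyN : y < N := by omega
    have hx0 : 0 < x := by omega
    obtain ⟨m', hm'⟩ : ∃ m', y - x = (d+1)*m' + d :=
      ⟨(y - x)/(d+1), by have := Nat.div_add_mod (y - x) (d+1); omega⟩
    have hm'K : m' < K := by
      have h2 : (d+1)*m' < (d+1)*K := by omega
      exact Nat.lt_of_mul_lt_mul_left h2
    have hm'k : m' ≤ k := by omega
    set Z := Ech a x y with hZ
    have hZdiag : IsDDiag d (k+1) Z := by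
      refine ⟨a + (x : ZMod N), m', by simpa using hm'k, ?_⟩
      rw [hZ, Ech]
      have e1 : y = x + (d + (d+1)*m') := by omega
      congr 1
      rw [e1]
      push_cast
      ring
    -- x, y are on the open side (s,t); relation to L:
    have hxyL : (s = 0 ∧ t = L ∧ 0 < x ∧ y < L) ∨ (s = L ∧ t = N ∧ L < x) := by
      rcases hside with ⟨h1, h2⟩ | ⟨h1, h2⟩
      · left; refine ⟨h1, by omega, by omega, by omega⟩
      · right; refine ⟨by omega, h2, by omega⟩
    have hZdisj : ∀ V, V ∈ B → V ≠ Z → DisjointDiag Z V ∧ DisjointDiag V Z := by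
      intro V hV hVZ
      by_cases hVX : V = Ech a 0 L
      · subst hVX
        constructor
        · constructor
          · exact vert_disj a hxN hyN (by omega) hLN (by omega) (by omega)
              (by omega) (by omega)
          · refine not_crosses a hxN hyN (by omega) hLN hxy h0L (by omega) (by omega)
              (by omega) (by omega) ?_
            omega
        · constructor
          · exact vert_disj a (by omega) hLN hxN hyN (by omega) (by omega)
              (by omega) (by omega)
          · refine not_crosses a (by omega) hLN hxN hyN h0L hxy (by omega) (by omega)
              (by omega) (by omega) ?_
            omega
      · obtain ⟨p, q, hpq, hqN, hres', rfl, hsides⟩ := hsplit V hV hVX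
        have hkey : (q < x ∨ y < p) ∨ ((x < p ∧ q < y) ∨ (p < x ∧ y < q)) := by
          by_cases hsame : s < p ∧ q < t
          · have hTmem : (p, q) ∈ T := (hmemT p q).2 ⟨hsame.1, hpq, hsame.2, hV⟩
            have hcom := hcomp _ hTmem
            simp only [ICompat] at hcom
            omega
          · left
            omega
        have hd1 : x ≠ p := by omega
        have hd2 : x ≠ q := by omega
        have hd3 : y ≠ p := by omega
        have hd4 : y ≠ q := by omega
        constructor
        · constructor
          · exact vert_disj a hxN hyN (by omega) hqN hd1 hd2 hd3 hd4
          · refine not_crosses a hxN hyN (by omega) hqN hxy hpq (Ne.symm hd1)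
              (Ne.symm hd3) (Ne.symm hd2) (Ne.symm hd4) ?_
            omega
        · constructor
          · exact vert_disj a (by omega) hqN hxN hyN (Ne.symm hd1) (Ne.symm hd3)
              (Ne.symm hd2) (Ne.symm hd4)
          · refine not_crosses a (by omega) hqN hxN hyN hpq hxy hd1 hd2 hd3 hd4 ?_
            omega
    have hB' : IsBrauer d (k+1) (insert Z B) := by
      constructor
      · intro W hW
        rcases Set.mem_insert_iff.1 hW with rfl | hWB
        · exact hZdiag
        · exact hB.1.1 W hWB
      · intro W hW W' hW' hne
        rcases Set.mem_insert_iff.1 hW with rfl | hWB <;>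
          rcases Set.mem_insert_iff.1 hW' with rfl | hW'B
        · exact absurd rfl hne
        · exact (hZdisj W' hW'B (Ne.symm hne)).1
        · exact (hZdisj W hWB hne).2
        · exact hB.1.2 W hWB W' hW'B hne
    have hBeq := hB.2 _ hB' (Set.subset_insert _ _)
    have hZB : Z ∈ B := by
      rw [← hBeq]; exact Set.mem_insert _ _
    have hTZ : (x, y) ∈ T := (hmemT x y).2 ⟨hsx, hxy, hyt, hZB⟩
    have hcontra := hcomp _ hTZ
    simp only [ICompat] at hcontra
    omega
  -- counting
  have hcount := interval_count hd T hGood hSat hK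
  have hseteq : {Y | Y ∈ B ∧ ∀ v ∈ Y, P v} = (fun c : ℕ × ℕ => Ech a c.1 c.2) '' ↑T := by
    ext Y
    simp only [Set.mem_setOf_eq, Set.mem_image, Finset.mem_coe]
    constructor
    · rintro ⟨hY, hall⟩
      have hYX : Y ≠ Ech a 0 L := by
        rintro rfl
        have hmem : a + ((0 : ℕ) : ZMod N) ∈ Ech a 0 L := by
          rw [Ech, Sym2.mem_iff]; left; rfl
        have := (hP 0 (by omega)).1 (hall _ hmem)
        omega
      obtain ⟨p, q, hpq, hqN, hres', rfl, hsides⟩ := hsplit Y hY hYX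
      have h1 := (hP p (by omega)).1 (hall _ (by rw [Ech, Sym2.mem_iff]; left; rfl))
      have h2 := (hP q hqN).1 (hall _ (by rw [Ech, Sym2.mem_iff]; right; rfl))
      exact ⟨(p, q), (hmemT p q).2 ⟨h1.1, hpq, h2.2, hY⟩, rfl⟩
    · rintro ⟨⟨p, q⟩, hmem, rfl⟩
      rw [hmemT] at hmem
      refine ⟨hmem.2.2.2, ?_⟩
      intro v hv
      rw [Ech, Sym2.mem_iff] at hv
      rcases hv with rfl | rfl
      · exact (hP p (by omega)).2 ⟨hmem.1, by omega⟩
      · exact (hP q (by omega)).2 ⟨by omega, hmem.2.2.1⟩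
  rw [hseteq, Set.ncard_image_of_injOn, Set.ncard_coe_finset, hcount]
  rintro ⟨p, q⟩ hc ⟨p', q'⟩ hc' h
  rw [Finset.mem_coe, hmemT] at hc hc'
  have := hEinj p q p' q' hc.2.1 (by omega) hc'.2.1 (by omega) h
  simp [Prod.ext_iff]
  exact this

lemma bet_iff0 {N : ℕ} [NeZero N] (a : ZMod N) {v w : ℕ} (hv : v < N) (hw : w < N) :
    Between a (a + (v : ZMod N)) (a + (w : ZMod N)) ↔ (0 < w ∧ w < v) := by
  have h := bet_iff a (u := 0) (by omega) hv hw
  simp only [Nat.cast_zero, add_zero] at h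
  rw [h]
  split_ifs <;> omega

lemma bet_iff0' {N : ℕ} [NeZero N] (a : ZMod N) {u w : ℕ} (hu : u < N) (hw : w < N)
    (hu0 : 0 < u) :
    Between (a + (u : ZMod N)) a (a + (w : ZMod N)) ↔ (u < w ∧ w < N) := by
  have h := bet_iff a (u := u) (v := 0) hu (by omega) hw
  simp only [Nat.cast_zero, add_zero] at h
  rw [h]
  split_ifs <;> omega

end Aux

/-- Let `B` be a maximal `d`-Brauer relation and `X = (i, i+d+(d+1)j) ∈ B`.  The diagonals
of `B` lying in the two connected components of the polygon minus `X` (i.e. having all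
their vertices strictly on one side of `X`) number `j` and `n-j-1` in some order. -/
theorem component_counts {d n N : ℕ} (hd : 1 ≤ d) (hn : 0 < n)
    (hN : N = (d + 1) * n + d - 1) (B : Set (Sym2 (ZMod N)))
    (hB : IsMaxBrauer d n B) (i : ZMod N) (j : ℕ) (hj : j ≤ n - 1)
    (hX : s(i, i + ((d + (d + 1) * j : ℕ) : ZMod N)) ∈ B) :
    ({Y | Y ∈ B ∧ ∀ v ∈ Y, Between i (i + ((d + (d + 1) * j : ℕ) : ZMod N)) v}.ncard = j ∧
       {Y | Y ∈ B ∧ ∀ v ∈ Y, Between (i + ((d + (d + 1) * j : ℕ) : ZMod N)) i v}.ncard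
         = n - j - 1) ∨
    ({Y | Y ∈ B ∧ ∀ v ∈ Y, Between i (i + ((d + (d + 1) * j : ℕ) : ZMod N)) v}.ncard
         = n - j - 1 ∧
       {Y | Y ∈ B ∧ ∀ v ∈ Y, Between (i + ((d + (d + 1) * j : ℕ) : ZMod N)) i v}.ncard = j) := by
  left
  obtain ⟨k, rfl⟩ : ∃ k, n = k + 1 := ⟨n - 1, by omega⟩
  have hjk : j ≤ k := by simpa using hj
  have hkexp : (d+1)*(k+1) = (d+1)*k + (d+1) := by ring
  have hNval : N = (d+1)*k + 2*d := by omega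
  haveI : NeZero N := ⟨by omega⟩
  have hLexp : (d+1)*j ≤ (d+1)*k := Nat.mul_le_mul_left _ hjk
  have hLN : (d + (d+1)*j) < N := by omega
  constructor
  · refine Aux.side_count hd hn hN hB i hj hX 0 (d + (d+1)*j) j (Or.inl ⟨rfl, rfl⟩)
      (by omega) hj _ ?_
    intro w hw
    exact Aux.bet_iff0 i hLN hw
  · refine Aux.side_count hd hn hN hB i hj hX (d + (d+1)*j) N (k + 1 - j - 1)
      (Or.inr ⟨rfl, rfl⟩) ?_ (by omega) _ ?_
    · have e1 : (d+1)*(k - j) + (d+1)*j = (d+1)*k := by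
        rw [← Nat.mul_add]
        congr 1
        omega
      have e2 : k + 1 - j - 1 = k - j := by omega
      rw [e2]
      omega
    · intro w hw
      exact Aux.bet_iff0' i hLN hw (by omega)


end BrauerComb
end

section
/- Let T be a k-linear Hom-finite Krull–Schmidt triangulated category with Serre functor S, and let C be a (-d)-Calabi–Yau configuration in T (d ≥ 1). Then S(C)[d] = C, i.e. the set C is stable under the autoequivalence S∘[d]. -/
open CategoryTheory Limits

universe v u w

namespace CYConfig

open scoped Classical

/-- An object of an additive category is indecomposable. -/
def Indec {T : Type v} [Category.{w} T] [Preadditive T] [HasBinaryBiproducts T]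
    (X : T) : Prop :=
  ¬ IsZero X ∧ ∀ (Y Z : T), (X ≅ Y ⊞ Z) → IsZero Y ∨ IsZero Z

/-- A `(-d)`-Calabi–Yau configuration: a set `C` of indecomposable objects such that
(1) `dim Hom(X,Y) = δ_{X,Y}` for `X, Y ∈ C`; (2) `Hom(X, Y[-j]) = 0` for `X, Y ∈ C`
and `0 < j ≤ d-1`; (3) every indecomposable `M` admits some `X ∈ C`, `0 ≤ j ≤ d-1`
with `Hom(X, M[-j]) ≠ 0`. -/
structure IsCYConfig {k : Type u} [Field k] (T : Type v) [Category.{w} T]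
    [Preadditive T] [Linear k T] [HasBinaryBiproducts T] [HasShift T ℤ]
    (d : ℕ) (C : Set T) : Prop where
  indec : ∀ X ∈ C, Indec X
  hom_dim : ∀ X ∈ C, ∀ Y ∈ C,
    Module.finrank k (X ⟶ Y) = if X = Y then 1 else 0
  neg_vanish : ∀ X ∈ C, ∀ Y ∈ C, ∀ j : ℤ, 0 < j → j ≤ (d : ℤ) - 1 →
    ∀ f : X ⟶ Y⟦-j⟧, f = 0
  detects : ∀ M : T, Indec M → ∃ X ∈ C, ∃ j : ℤ, 0 ≤ j ∧ j ≤ (d : ℤ) - 1 ∧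
    ∃ f : X ⟶ M⟦-j⟧, f ≠ 0

section LinAlg

variable {k : Type u} [Field k]

lemma zero_dim {V : Type*} [AddCommGroup V] [Module k V] [Module.Finite k V]
    (h : Module.finrank k V = 0) (v : V) : v = 0 := by
  have : Subsingleton V := Module.finrank_zero_iff.mp h
  exact Subsingleton.elim v 0

lemma one_dim {V : Type*} [AddCommGroup V] [Module k V]
    (h : Module.finrank k V = 1) {w : V} (hw : w ≠ 0) (v : V) : ∃ a : k, v = a • w := by
  obtain ⟨v₀, hv₀, hspan⟩ := (finrank_eq_one_iff' (K := k) (V := V)).mp h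
  obtain ⟨cw, hcw⟩ := hspan w
  obtain ⟨cv, hcv⟩ := hspan v
  have hcw0 : cw ≠ 0 := by rintro rfl; rw [zero_smul] at hcw; exact hw hcw.symm
  refine ⟨cv * cw⁻¹, ?_⟩
  rw [← hcw, smul_smul, ← hcv]
  congr 1
  field_simp

end LinAlg

section ShiftHelpers

variable {T : Type v} [Category.{w} T] [HasShift T ℤ]

/-- `Y⟦m⟧ ≅ Y` when `m = 0`. -/
noncomputable def shiftIsoZero (m : ℤ) (h : m = 0) (Y : T) : Y⟦m⟧ ≅ Y := by
  subst h
  exact (shiftFunctorZero T ℤ).app Y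

/-- `Y⟦a⟧⟦b⟧ ≅ Y⟦c⟧` when `a + b = c`. -/
noncomputable def shiftShiftIso (a b c : ℤ) (h : a + b = c) (Y : T) : Y⟦a⟧⟦b⟧ ≅ Y⟦c⟧ :=
  ((shiftFunctorAdd' T a b c h).app Y).symm

end ShiftHelpers

section CompHelpers

variable {T : Type v} [Category.{w} T] [Preadditive T]

lemma comp_iso_ne_zero {U V V' : T} {w : U ⟶ V} (e : V ≅ V') (hw : w ≠ 0) :
    w ≫ e.hom ≠ 0 := by
  intro h0
  apply hw
  have h1 := congrArg (fun z => z ≫ e.inv) h0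
  simpa using h1

lemma eq_zero_of_comp_iso_eq_zero {U V V' : T} {w : U ⟶ V} (e : V ≅ V')
    (h0 : w ≫ e.hom = 0) : w = 0 := by
  have h1 := congrArg (fun z => z ≫ e.inv) h0
  simpa using h1

lemma eq_zero_of_iso_comp_eq_zero {U A B : T} {w : A ⟶ U} (e : A ≅ B)
    (h0 : e.inv ≫ w = 0) : w = 0 := by
  have h1 := congrArg (fun z => e.hom ≫ z) h0
  simpa using h1

end CompHelpers

section ShiftAdj

variable {T : Type v} [Category.{w} T] [Preadditive T] [HasShift T ℤ]
  [∀ n : ℤ, (shiftFunctor T n).Additive]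

lemma shift_homEquiv_zero_iff (n m : ℤ) (h : n + m = 0) (U V : T)
    (φ : (shiftFunctor T n).obj U ⟶ V) :
    ((shiftEquiv' T n m h).toAdjunction.homEquiv U V) φ = 0 ↔ φ = 0 := by
  constructor
  · intro h0
    have h1 := congrArg ((shiftEquiv' T n m h).toAdjunction.homEquiv U V).symm h0
    erw [Equiv.symm_apply_apply] at h1
    rw [h1, Adjunction.homEquiv_counit]
    simp
    rfl
  · rintro rfl
    erw [Adjunction.homEquiv_unit]
    simp
    exact (shiftFunctor T m).map_zero _ _

end ShiftAdj

section Serre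

variable {k : Type u} [Field k] {T : Type v} [Category.{w} T] [Preadditive T] [Linear k T]
  [homFin : ∀ X Y : T, Module.Finite k (X ⟶ Y)]
  (S : T ⥤ T)

/-- If `Hom(U, SX) ≠ 0` then `Hom(X, U) ≠ 0`. -/
lemma serre_nonzero_of
    (η : ∀ X Y : T, (X ⟶ Y) ≃ₗ[k] Module.Dual k (Y ⟶ S.obj X)) {X U : T} (w : U ⟶ S.obj X) (hw : w ≠ 0) :
    ∃ u : X ⟶ U, u ≠ 0 := by
  have h1 : ¬ (∀ φ : Module.Dual k (U ⟶ S.obj X), φ w = 0) := by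
    rw [Module.forall_dual_apply_eq_zero_iff k w]; exact hw
  push_neg at h1
  obtain ⟨φ, hφ⟩ := h1
  refine ⟨(η X U).symm φ, fun h0 => hφ ?_⟩
  have h2 : φ = η X U ((η X U).symm φ) := (LinearEquiv.apply_symm_apply _ _).symm
  rw [h2, h0, map_zero]
  rfl

/-- If `Hom(X, U) ≠ 0` then `Hom(U, SX) ≠ 0`. -/
lemma serre_nonzero_to
    (η : ∀ X Y : T, (X ⟶ Y) ≃ₗ[k] Module.Dual k (Y ⟶ S.obj X)) {X U : T} (u : X ⟶ U) (hu : u ≠ 0) :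
    ∃ w : U ⟶ S.obj X, w ≠ 0 := by
  have h1 : η X U u ≠ 0 := by
    intro h0
    exact hu ((LinearEquiv.map_eq_zero_iff _).mp h0)
  have h2 : ¬ (∀ w : U ⟶ S.obj X, η X U u w = 0) := by
    intro hall
    exact h1 (LinearMap.ext hall)
  push_neg at h2
  obtain ⟨w, hw⟩ := h2
  refine ⟨w, fun h0 => hw ?_⟩
  rw [h0, map_zero]

/-- Serre-duality pairing: any nonzero `t : U ⟶ SX` is hit by a pre-composition. -/
lemma serre_pair
    (η : ∀ X Y : T, (X ⟶ Y) ≃ₗ[k] Module.Dual k (Y ⟶ S.obj X))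
    (hη₁ : ∀ (X Y Z : T) (u : X ⟶ Y) (v : Y ⟶ Z) (w : Z ⟶ S.obj X),
      η X Z (u ≫ v) w = η X Y u (v ≫ w))
    {X U : T} (t : U ⟶ S.obj X) (ht : t ≠ 0) :
    ∃ b : X ⟶ U, b ≫ t ≠ 0 := by
  have h1 : ¬ (∀ φ : Module.Dual k (U ⟶ S.obj X), φ t = 0) := by
    rw [Module.forall_dual_apply_eq_zero_iff k t]; exact ht
  push_neg at h1
  obtain ⟨φ, hφ⟩ := h1
  refine ⟨(η X U).symm φ, fun h0 => hφ ?_⟩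
  have key : (η X (S.obj X) (((η X U).symm φ) ≫ t)) (𝟙 (S.obj X)) = φ t := by
    rw [hη₁ X U (S.obj X) _ t (𝟙 _), Category.comp_id, LinearEquiv.apply_symm_apply]
  rw [← key, h0, map_zero]
  rfl

lemma finrank_hom_S_self
    (η : ∀ X Y : T, (X ⟶ Y) ≃ₗ[k] Module.Dual k (Y ⟶ S.obj X)) {X : T} (h1 : Module.finrank k (X ⟶ X) = 1) :
    Module.finrank k (X ⟶ S.obj X) = 1 := by
  have h2 := LinearEquiv.finrank_eq (η X X)
  rw [Subspace.dual_finrank_eq] at h2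
  omega

end Serre

section Indec

variable {T : Type v} [Category.{w} T] [Preadditive T] [HasBinaryBiproducts T]

lemma indec_of_equiv (F : T ⥤ T) [F.IsEquivalence] {X : T} (hX : Indec X) :
    Indec (F.obj X) := by
  haveI h1 : PreservesLimitsOfSize.{0, 0} F := preservesSmallestLimits_of_preservesLimits F
  haveI h2 : PreservesLimitsOfSize.{0, 0} F.inv := preservesSmallestLimits_of_preservesLimits F.inv
  haveI h3 : PreservesBinaryBiproducts F := preservesBinaryBiproducts_of_preservesBinaryProducts F
  haveI h4 : PreservesBinaryBiproducts F.inv :=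
    preservesBinaryBiproducts_of_preservesBinaryProducts F.inv
  constructor
  · intro hz
    exact hX.1 (IsZero.of_iso (F.inv.map_isZero hz) (F.asEquivalence.unitIso.app X))
  · intro A B iso
    haveI := h4.preserves (X := A) (Y := B)
    have iso2 : X ≅ F.inv.obj A ⊞ F.inv.obj B :=
      F.asEquivalence.unitIso.app X ≪≫ F.inv.mapIso iso ≪≫ F.inv.mapBiprod A B
    rcases hX.2 _ _ iso2 with h | h
    · exact Or.inl (IsZero.of_iso (F.map_isZero h) (F.asEquivalence.counitIso.app A).symm)
    · exact Or.inr (IsZero.of_iso (F.map_isZero h) (F.asEquivalence.counitIso.app B).symm)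

variable {k : Type u} [Field k] [Linear k T]

/-- `Hom(A ⊞ B, W) ≃ₗ Hom(A, W) × Hom(B, W)`. -/
noncomputable def homBiprodOut (A B W : T) :
    ((A ⊞ B : T) ⟶ W) ≃ₗ[k] (A ⟶ W) × (B ⟶ W) where
  toFun g := (biprod.inl ≫ g, biprod.inr ≫ g)
  map_add' g₁ g₂ := by simp [Preadditive.comp_add]
  map_smul' a g := by simp [Linear.comp_smul]
  invFun p := biprod.desc p.1 p.2
  left_inv g := by apply biprod.hom_ext' <;> simp
  right_inv p := by simp

/-- `Hom(V, A ⊞ B) ≃ₗ Hom(V, A) × Hom(V, B)`. -/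
noncomputable def homBiprodIn (V A B : T) :
    (V ⟶ (A ⊞ B : T)) ≃ₗ[k] (V ⟶ A) × (V ⟶ B) where
  toFun g := (g ≫ biprod.fst, g ≫ biprod.snd)
  map_add' g₁ g₂ := by simp [Preadditive.add_comp]
  map_smul' a g := by simp [Linear.smul_comp]
  invFun p := biprod.lift p.1 p.2
  left_inv g := by apply biprod.hom_ext <;> simp
  right_inv p := by simp

/-- Conjugation by an isomorphism as a linear equivalence on endomorphisms. -/
noncomputable def homConj {Z W : T} (iso : Z ≅ W) : (Z ⟶ Z) ≃ₗ[k] (W ⟶ W) where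
  toFun g := iso.inv ≫ g ≫ iso.hom
  map_add' g₁ g₂ := by simp [Preadditive.add_comp, Preadditive.comp_add]
  map_smul' a g := by simp [Linear.smul_comp, Linear.comp_smul]
  invFun g := iso.hom ≫ g ≫ iso.inv
  left_inv g := by simp
  right_inv g := by simp

lemma exists_indec_summand [homFin : ∀ X Y : T, Module.Finite k (X ⟶ Y)]
    (Z : T) (hZ : ¬ IsZero Z) :
    ∃ (N : T) (i : N ⟶ Z) (r : Z ⟶ N), i ≫ r = 𝟙 N ∧ Indec N := by
  suffices H : ∀ n : ℕ, ∀ Z : T, Module.finrank k (Z ⟶ Z) ≤ n → ¬ IsZero Z →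
      ∃ (N : T) (i : N ⟶ Z) (r : Z ⟶ N), i ≫ r = 𝟙 N ∧ Indec N from H _ Z le_rfl hZ
  intro n
  induction n using Nat.strong_induction_on with
  | _ n IH =>
    intro Z hn hZ
    by_cases hindec : Indec Z
    · exact ⟨Z, 𝟙 Z, 𝟙 Z, by simp, hindec⟩
    · have hQ : ¬ ∀ (A B : T) (_ : Z ≅ A ⊞ B), IsZero A ∨ IsZero B :=
        fun hq => hindec ⟨hZ, fun A B i => hq A B i⟩
      push_neg at hQ
      obtain ⟨A, B, iso, hA, hB⟩ := hQ
      have e1 : (Z ⟶ Z) ≃ₗ[k] ((A ⟶ A) × (A ⟶ B)) × ((B ⟶ A) × (B ⟶ B)) :=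
        (homConj (k := k) iso).trans
          (((homBiprodOut (k := k) A B (A ⊞ B)).trans
            ((homBiprodIn (k := k) A A B).prodCongr (homBiprodIn (k := k) B A B))))
      have hr : Module.finrank k (Z ⟶ Z) =
          Module.finrank k (A ⟶ A) + Module.finrank k (A ⟶ B) +
            (Module.finrank k (B ⟶ A) + Module.finrank k (B ⟶ B)) := by
        rw [LinearEquiv.finrank_eq e1, Module.finrank_prod, Module.finrank_prod,
          Module.finrank_prod]
      have hBpos : 0 < Module.finrank k (B ⟶ B) := by
        rw [Module.finrank_pos_iff]
        refine ⟨⟨𝟙 B, 0, fun h => hB ?_⟩⟩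
        rw [IsZero.iff_id_eq_zero]
        exact h
      have hlt : Module.finrank k (A ⟶ A) < n := by omega
      obtain ⟨N, i, r, hir, hN⟩ := IH _ hlt A le_rfl hA
      refine ⟨N, i ≫ biprod.inl ≫ iso.inv, iso.hom ≫ biprod.fst ≫ r, ?_, hN⟩
      simp [hir]

end Indec

section Main

variable {k : Type u} [Field k]
variable {T : Type v} [Category.{w} T] [Preadditive T] [Linear k T]
  [HasShift T ℤ] [HasZeroObject T] [∀ n : ℤ, (shiftFunctor T n).Additive]
  [Pretriangulated T] [HasBinaryBiproducts T]
  [homFin : ∀ X Y : T, Module.Finite k (X ⟶ Y)]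

open Pretriangulated

/-- The key lemma: a nonzero map `Y ⟶ (SX)⟦d⟧` between members of a `(-d)`-CY
configuration (target twisted by the Serre functor and shifted) is an isomorphism. -/
lemma main_iso (S : T ⥤ T)
    (η : ∀ X Y : T, (X ⟶ Y) ≃ₗ[k] Module.Dual k (Y ⟶ S.obj X))
    (hη₁ : ∀ (X Y Z : T) (u : X ⟶ Y) (v : Y ⟶ Z) (w : Z ⟶ S.obj X),
      η X Z (u ≫ v) w = η X Y u (v ≫ w))
    (d : ℕ) (C : Set T) (hC : IsCYConfig (k := k) T d C)
    {X Y : T} (hX : X ∈ C) (hY : Y ∈ C)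
    (f : Y ⟶ (S.obj X)⟦(d : ℤ)⟧) (hf : f ≠ 0) : IsIso f := by
  obtain ⟨Cf, g, h, hT⟩ := Pretriangulated.distinguished_cocone_triangle f
  have hΔ' : (Triangle.mk f g h).invRotate ∈ distTriang T := inv_rot_of_distTriang _ hT
  set Δ' := (Triangle.mk f g h).invRotate with hΔ'def
  have hzero : IsZero Δ'.obj₁ := by
    by_contra hnz
    obtain ⟨N, i, r, hir, hN⟩ := exists_indec_summand (k := k) _ hnz
    obtain ⟨X', hX', j, hj0, hj1, u, hu⟩ := hC.detects N hN
    -- the shifted triangle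
    let Θ := (Pretriangulated.Triangle.shiftFunctor T (-j)).obj Δ'
    have hΘ : Θ ∈ distTriang T := Pretriangulated.Triangle.shift_distinguished Δ' hΔ' (-j)
    -- the detected nonzero map into the shifted first object
    let e : X' ⟶ Θ.obj₁ := u ≫ (shiftFunctor T (-j)).map i
    have he : e ≠ 0 := by
      intro h0
      apply hu
      have h1 : e ≫ (shiftFunctor T (-j)).map r = u := by
        simp only [e, Category.assoc, ← Functor.map_comp, hir]
        erw [Category.assoc, ← Functor.map_comp, hir, CategoryTheory.Functor.map_id, Category.comp_id]
      rw [← h1, h0]; exact zero_comp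
    have hΘm₂ : Θ.mor₂ ≠ 0 := by
      have h1 : Θ.mor₂ = (-j).negOnePow • (shiftFunctor T (-j)).map f := rfl
      intro h0
      rw [h1] at h0
      have h2 : (shiftFunctor T (-j)).map f = 0 := by
        rw [← inv_smul_smul ((-j).negOnePow) ((shiftFunctor T (-j)).map f), h0]; exact smul_zero (M := ℤˣ) (A := ((shiftFunctor T (-j)).obj Y ⟶ (shiftFunctor T (-j)).obj ((shiftFunctor T (d : ℤ)).obj (S.obj X)))) _
      exact hf ((Functor.map_eq_zero_iff _).mp h2)
    have hs0 : e ≫ Θ.mor₁ ≫ Θ.mor₂ = 0 := by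
      rw [comp_distTriang_mor_zero₁₂ Θ hΘ, comp_zero]
    by_cases hs : e ≫ Θ.mor₁ = 0
    · -- exactness: `e` factors through `Θ.obj₃⟦-1⟧`
      have hΘ₁ : Θ.invRotate ∈ distTriang T := inv_rot_of_distTriang _ hΘ
      obtain ⟨c, hc⟩ := Pretriangulated.Triangle.coyoneda_exact₂ _ hΘ₁ e hs
      have hcne : c ≠ 0 := by
        intro h0
        exact he (by rw [hc, h0, zero_comp]; rfl)
      -- identify `Θ.obj₃⟦-1⟧` with `(S.obj X)⟦m⟧`
      set m : ℤ := (d : ℤ) - j - 1 with hm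
      have hm0 : 0 ≤ m := by omega
      let κ : Θ.obj₃⟦(-1 : ℤ)⟧ ≅ (S.obj X)⟦m⟧ :=
        (shiftFunctor T (-1)).mapIso
            (shiftShiftIso (d : ℤ) (-j) ((d : ℤ) + -j) rfl (S.obj X)) ≪≫
          shiftShiftIso ((d : ℤ) + -j) (-1) m (by omega) (S.obj X)
      have hc' : c ≫ κ.hom ≠ 0 := comp_iso_ne_zero κ hcne
      -- transfer along the shift adjunction and Serre duality
      let adj := (shiftEquiv' T (-m) m (by omega)).toAdjunction
      have hc'' : (adj.homEquiv X' (S.obj X)).symm (c ≫ κ.hom) ≠ 0 := by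
        intro h0
        apply hc'
        have h1 := congrArg (fun z => (adj.homEquiv X' (S.obj X)) z) h0
        simp only [Equiv.apply_symm_apply] at h1
        erw [h1]
        exact (shift_homEquiv_zero_iff (-m) m (by omega) X' (S.obj X) 0).mpr rfl
      obtain ⟨u₂, hu₂⟩ := serre_nonzero_of S η _ hc''
      -- `u₂ : X ⟶ X'⟦-m⟧`
      by_cases hmpos : 0 < m
      · exact hu₂ (hC.neg_vanish X hX X' hX' m hmpos (by omega) u₂)
      · -- `m = 0`, so `X' = X`, and we use the surjectivity argument
        have hmz : m = 0 := by omega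
        have hu₃ : u₂ ≫ (shiftIsoZero (-m) (by omega) X').hom ≠ 0 :=
          comp_iso_ne_zero _ hu₂
        have hXX' : X = X' := by
          by_contra hne
          have h0 := hC.hom_dim X hX X' hX'
          rw [if_neg hne] at h0
          exact hu₃ (zero_dim (k := k) h0 _)
        subst hXX'
        -- the inverse-rotated-twice triangle
        have hΘ₂ : Θ.invRotate.invRotate ∈ distTriang T := inv_rot_of_distTriang _ hΘ₁
        -- `t : Θ.obj₂⟦-1⟧ ⟶ Θ.obj₃⟦-1⟧` is nonzero
        have ht : Θ.invRotate.invRotate.mor₁ ≠ 0 := by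
          have h1 : Θ.invRotate.mor₃ ≠ 0 := by
            rw [Pretriangulated.Triangle.invRotate_mor₃]
            intro h0
            exact hΘm₂ (eq_zero_of_comp_iso_eq_zero (asIso ((shiftEquiv T (1:ℤ)).counitIso.inv.app Θ.obj₃)) h0)
          rw [Pretriangulated.Triangle.invRotate_mor₁]
          intro h0
          erw [neg_eq_zero] at h0
          have h2 := eq_zero_of_comp_iso_eq_zero (asIso ((shiftEquiv T (1:ℤ)).unitIso.inv.app Θ.invRotate.obj₁)) h0
          exact h1 ((Functor.map_eq_zero_iff _).mp h2)
        let κ' : Θ.obj₃⟦(-1 : ℤ)⟧ ≅ S.obj X := κ ≪≫ shiftIsoZero m hmz (S.obj X)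
        have ht' : Θ.invRotate.invRotate.mor₁ ≫ κ'.hom ≠ 0 := comp_iso_ne_zero κ' ht
        obtain ⟨b, hb⟩ := serre_pair S η hη₁ _ ht'
        -- the one-dimensionality of `Hom(X, S X)`
        have hdim : Module.finrank k (X ⟶ S.obj X) = 1 := by
          apply finrank_hom_S_self S η
          have h0 := hC.hom_dim X hX X hX
          rwa [if_pos rfl] at h0
        have hbt : (b ≫ Θ.invRotate.invRotate.mor₁) ≫ κ'.hom ≠ 0 := by
          erw [Category.assoc]
          exact hb
        obtain ⟨a, ha⟩ := one_dim (k := k) hdim hbt ((c ≫ κ'.hom : X ⟶ S.obj X))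
        -- conclude that `c` factors through `mor₁`, hence `e = 0`
        have hc2 : c = a • (b ≫ Θ.invRotate.invRotate.mor₁) := by
          have h1 : (c ≫ κ'.hom) ≫ κ'.inv = c := by erw [Category.assoc, Iso.hom_inv_id, Category.comp_id]
          rw [← h1, ha]
          erw [Linear.smul_comp, Category.assoc, Iso.hom_inv_id, Category.comp_id]
          rfl
        apply he
        have hzz : Θ.invRotate.invRotate.mor₁ ≫ Θ.invRotate.invRotate.mor₂ = 0 :=
          comp_distTriang_mor_zero₁₂ _ hΘ₂
        erw [hc, hc2, Linear.smul_comp, Category.assoc]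
        erw [show Θ.invRotate.mor₁ = Θ.invRotate.invRotate.mor₂ from rfl, hzz, comp_zero, smul_zero]
        rfl
    · -- the retraction case: `s ≠ 0` forces `j = 0` and `X' = Y`, whence `f = 0`
      have hj00 : j = 0 := by
        by_contra hj
        exact hs (hC.neg_vanish X' hX' Y hY j (by omega) hj1 (e ≫ Θ.mor₁))
      subst hj00
      let ι := shiftIsoZero (T := T) (-(0 : ℤ)) neg_zero Y
      have hs₀ : (e ≫ Θ.mor₁) ≫ ι.hom ≠ 0 := comp_iso_ne_zero ι hs
      have hX'Y : X' = Y := by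
        by_contra hne
        have h0 := hC.hom_dim X' hX' Y hY
        rw [if_neg hne] at h0
        exact hs₀ (zero_dim (k := k) h0 _)
      subst hX'Y
      have hid : 𝟙 X' ≠ 0 := by
        intro h0
        exact (hC.indec X' hX').1 ((IsZero.iff_id_eq_zero X').mpr h0)
      have hd1 : Module.finrank k (X' ⟶ X') = 1 := by
        have h0 := hC.hom_dim X' hX' X' hX'
        rwa [if_pos rfl] at h0
      obtain ⟨a, ha⟩ := one_dim (k := k) hd1 hid ((e ≫ Θ.mor₁) ≫ ι.hom)
      have ha0 : a ≠ 0 := by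
        rintro rfl
        rw [zero_smul] at ha
        exact hs₀ ha
      -- now `(e ≫ Θ.mor₁) = a • ι.inv` and `(e ≫ Θ.mor₁) ≫ Θ.mor₂ = 0`
      have h1 : e ≫ Θ.mor₁ = a • ι.inv := by
        have := congrArg (fun z => z ≫ ι.inv) ha
        simp only [Category.assoc, Iso.hom_inv_id, Category.comp_id, Category.id_comp,
          Linear.smul_comp] at this
        erw [Category.assoc, Iso.hom_inv_id, Category.comp_id] at this
        exact this
      have h2 : a • (ι.inv ≫ Θ.mor₂) = 0 := by
        erw [← Linear.smul_comp, ← h1, Category.assoc]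
        exact hs0
      have h3 : ι.inv ≫ Θ.mor₂ = 0 := by
        rcases smul_eq_zero.mp h2 with h | h
        · exact absurd h ha0
        · exact h
      exact hΘm₂ (eq_zero_of_iso_comp_eq_zero ι h3)
  exact (Pretriangulated.Triangle.isZero₁_iff_isIso₂ Δ' hΔ').mp hzero

/-- Theorem (CY-configurations are `S[d]`-stable). -/
theorem cyConfig_serre_shift_stable' [IsTriangulated T] [IsIdempotentComplete T]
    (S : T ⥤ T) [S.IsEquivalence]
    (η : ∀ X Y : T, (X ⟶ Y) ≃ₗ[k] Module.Dual k (Y ⟶ S.obj X))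
    (hη₁ : ∀ (X Y Z : T) (u : X ⟶ Y) (v : Y ⟶ Z) (w : Z ⟶ S.obj X),
      η X Z (u ≫ v) w = η X Y u (v ≫ w))
    (hη₂ : ∀ (X' X Y : T) (a : X' ⟶ X) (u : X ⟶ Y) (w : Y ⟶ S.obj X'),
      η X' Y (a ≫ u) w = η X Y u (w ≫ S.map a))
    (d : ℕ) (hd : 1 ≤ d) (C : Set T) (hC : IsCYConfig (k := k) T d C) :
    (∀ X ∈ C, ∃ Y ∈ C, Nonempty ((S.obj X)⟦(d : ℤ)⟧ ≅ Y)) ∧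
    (∀ Y ∈ C, ∃ X ∈ C, Nonempty ((S.obj X)⟦(d : ℤ)⟧ ≅ Y)) := by
  constructor
  · -- `S(C)[d] ⊆ C` up to isomorphism
    intro X hX
    have hνindec : Indec ((S.obj X)⟦(d : ℤ)⟧) :=
      indec_of_equiv (shiftFunctor T (d : ℤ)) (indec_of_equiv S (hC.indec X hX))
    obtain ⟨Y, hY, j, hj0, hj1, u, hu⟩ := hC.detects _ hνindec
    have hj : j = 0 := by
      by_contra hj
      have hjpos : 0 < j := by omega
      set m : ℤ := (d : ℤ) - j with hm
      let κ := shiftShiftIso (d : ℤ) (-j) m (by omega) (S.obj X)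
      have hu1 : u ≫ κ.hom ≠ 0 := comp_iso_ne_zero κ hu
      let adj := (shiftEquiv' T (-m) m (by omega)).toAdjunction
      have hw : (adj.homEquiv Y (S.obj X)).symm (u ≫ κ.hom) ≠ 0 := by
        intro h0
        apply hu1
        have h1 := congrArg (fun z => (adj.homEquiv Y (S.obj X)) z) h0
        simp only [Equiv.apply_symm_apply] at h1
        erw [h1]
        exact (shift_homEquiv_zero_iff (-m) m (by omega) Y (S.obj X) 0).mpr rfl
      obtain ⟨u₂, hu₂⟩ := serre_nonzero_of S η _ hw
      exact hu₂ (hC.neg_vanish X hX Y hY m (by omega) (by omega) u₂)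
    subst hj
    let ι := shiftIsoZero (T := T) (-(0 : ℤ)) neg_zero ((S.obj X)⟦(d : ℤ)⟧)
    have hf : u ≫ ι.hom ≠ 0 := comp_iso_ne_zero ι hu
    have : IsIso (u ≫ ι.hom) := main_iso S η hη₁ d C hC hX hY _ hf
    exact ⟨Y, hY, ⟨(asIso (u ≫ ι.hom)).symm⟩⟩
  · -- `C ⊆ S(C)[d]` up to isomorphism
    intro Y hY
    have hM : Indec ((Y : T)⟦(-1 : ℤ)⟧) :=
      indec_of_equiv (shiftFunctor T (-1 : ℤ)) (hC.indec Y hY)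
    obtain ⟨X, hX, j, hj0, hj1, u, hu⟩ := hC.detects _ hM
    let κ := shiftShiftIso (-1 : ℤ) (-j) (-(1 + j)) (by ring) Y
    have hu1 : u ≫ κ.hom ≠ 0 := comp_iso_ne_zero κ hu
    have hjd : 1 + j = (d : ℤ) := by
      by_contra hne
      exact hu1 (hC.neg_vanish X hX Y hY (1 + j) (by omega) (by omega) _)
    have hty : (Y : T)⟦-(1 + j)⟧ = Y⟦-(d : ℤ)⟧ := by rw [hjd]
    have hu2 : (u ≫ κ.hom) ≫ eqToHom hty ≠ 0 := by
      intro h0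
      apply hu1
      have h1 := congrArg (fun z => z ≫ eqToHom hty.symm) h0
      simpa using h1
    obtain ⟨w, hw⟩ := serre_nonzero_to S η _ hu2
    let adj := (shiftEquiv' T (-(d : ℤ)) (d : ℤ) (by omega)).toAdjunction
    let f : Y ⟶ (S.obj X)⟦(d : ℤ)⟧ := (adj.homEquiv Y (S.obj X)) w
    have hf : f ≠ 0 := by
      intro h0
      exact hw ((shift_homEquiv_zero_iff (-(d : ℤ)) (d : ℤ) (by omega) Y (S.obj X) w).mp h0)
    have : IsIso f := main_iso S η hη₁ d C hC hX hY f hf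
    exact ⟨X, hX, ⟨(asIso f).symm⟩⟩

end Main

/-- Theorem (CY-configurations are `S[d]`-stable):  if `T` is a `k`-linear Hom-finite
Krull–Schmidt triangulated category (Krull–Schmidt being guaranteed by Hom-finiteness
over the field `k` together with idempotent completeness) with Serre functor `S`, and
`C` is a `(-d)`-CY configuration in `T` (`d ≥ 1`), then `S(C)[d] = C` (as a class of
objects closed under isomorphism). -/
theorem cyConfig_serre_shift_stable {k : Type u} [Field k]
    {T : Type v} [Category.{w} T] [Preadditive T] [Linear k T]
    [HasShift T ℤ] [HasZeroObject T] [∀ n : ℤ, (shiftFunctor T n).Additive]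
    [Pretriangulated T] [IsTriangulated T]
    [HasBinaryBiproducts T] [IsIdempotentComplete T]
    [homFin : ∀ X Y : T, Module.Finite k (X ⟶ Y)]
    (S : T ⥤ T) [S.IsEquivalence]
    (η : ∀ X Y : T, (X ⟶ Y) ≃ₗ[k] Module.Dual k (Y ⟶ S.obj X))
    (hη₁ : ∀ (X Y Z : T) (u : X ⟶ Y) (v : Y ⟶ Z) (w : Z ⟶ S.obj X),
      η X Z (u ≫ v) w = η X Y u (v ≫ w))
    (hη₂ : ∀ (X' X Y : T) (a : X' ⟶ X) (u : X ⟶ Y) (w : Y ⟶ S.obj X'),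
      η X' Y (a ≫ u) w = η X Y u (w ≫ S.map a))
    (d : ℕ) (hd : 1 ≤ d) (C : Set T) (hC : IsCYConfig (k := k) T d C) :
    (∀ X ∈ C, ∃ Y ∈ C, Nonempty ((S.obj X)⟦(d : ℤ)⟧ ≅ Y)) ∧
    (∀ Y ∈ C, ∃ X ∈ C, Nonempty ((S.obj X)⟦(d : ℤ)⟧ ≅ Y)) := by
  exact cyConfig_serre_shift_stable' S η hη₁ hη₂ d hd C hC

end CYConfig
end

section
/- Let T be a k-linear Hom-finite triangulated category with Serre functor S, let X ∈ T with End(X) = k, and let f ∈ Hom(X, S X). Then for any Y and any g ∈ Hom(S X, Y) that is not a split monomorphism, the composite g∘f = 0. -/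
open CategoryTheory

universe v u w

/-- An equivalence sends a zero object to a zero object. -/
lemma isZero_obj_of_isZero_aux {C : Type*} {D : Type*} [Category C] [Category D]
    (S : C ⥤ D) [S.IsEquivalence] {Z : C} (hZ : Limits.IsZero Z) :
    Limits.IsZero (S.obj Z) := by
  have adj : S ⊣ S.asEquivalence.inverse := S.asEquivalence.toAdjunction
  constructor
  · intro W
    have : Unique (Z ⟶ S.asEquivalence.inverse.obj W) := (hZ.unique_to _).some
    exact ⟨(adj.homEquiv Z W).unique⟩
  · intro W
    have e : (W ⟶ S.obj Z) ≃ (S.asEquivalence.inverse.obj W ⟶ Z) :=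
      (S.asEquivalence.symm.toAdjunction.homEquiv W Z).symm
    have : Unique (S.asEquivalence.inverse.obj W ⟶ Z) := (hZ.unique_from _).some
    exact ⟨e.unique⟩

/-- Let `T` be a `k`-linear Hom-finite triangulated category with Serre functor `S`
(encoded by the bifunctorial dualities `η`), let `X ∈ T` with `End X = k`, and let
`f : X ⟶ S X`.  Then for any `Y` and any `g : S X ⟶ Y` which is not a split
monomorphism, `f ≫ g = 0`. -/
theorem serre_composition_zero {k : Type u} [Field k]
    {T : Type v} [Category.{w} T] [Preadditive T] [Linear k T]
    [HasShift T ℤ] [Limits.HasZeroObject T] [∀ n : ℤ, (shiftFunctor T n).Additive]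
    [Pretriangulated T] [IsTriangulated T]
    [homFin : ∀ X Y : T, Module.Finite k (X ⟶ Y)]
    (S : T ⥤ T) [S.IsEquivalence]
    -- Serre duality data: `D Hom(A,B) ≅ Hom(B, S A)`, i.e. `Hom(A,B) ≅ D Hom(B, S A)`
    (η : ∀ X Y : T, (X ⟶ Y) ≃ₗ[k] Module.Dual k (Y ⟶ S.obj X))
    -- binaturality in the second variable
    (hη₁ : ∀ (X Y Z : T) (u : X ⟶ Y) (v : Y ⟶ Z) (w : Z ⟶ S.obj X),
      η X Z (u ≫ v) w = η X Y u (v ≫ w))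
    -- binaturality in the first variable
    (hη₂ : ∀ (X' X Y : T) (a : X' ⟶ X) (u : X ⟶ Y) (w : Y ⟶ S.obj X'),
      η X' Y (a ≫ u) w = η X Y u (w ≫ S.map a))
    (X : T) (hX : ∀ e : X ⟶ X, ∃ c : k, e = c • 𝟙 X)
    (Y : T) (f : X ⟶ S.obj X) (g : S.obj X ⟶ Y) (hg : ¬ IsSplitMono g) :
    f ≫ g = 0 := by
  by_contra hfg
  -- the corresponding linear functional is nonzero
  have hne : (η X Y) (f ≫ g) ≠ 0 := by
    intro h
    exact hfg ((η X Y).injective (h.trans (map_zero (η X Y)).symm))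
  -- pick a test morphism where it is nonzero
  obtain ⟨w, hw⟩ : ∃ w : Y ⟶ S.obj X, (η X Y) (f ≫ g) w ≠ 0 := by
    by_contra h
    push_neg at h
    exact hne (LinearMap.ext fun w => h w)
  -- then g ≫ w ≠ 0
  have hgw : g ≫ w ≠ 0 := by
    intro h0
    rw [hη₁ X (S.obj X) Y f g w, h0, map_zero] at hw
    exact hw rfl
  set e : S.obj X ⟶ S.obj X := g ≫ w with he_def
  obtain ⟨c, hc⟩ := hX (S.preimage e)
  have he : S.map (S.preimage e) = e := S.map_preimage e
  by_cases hc0 : c = 0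
  · -- then `S.preimage e = 0`, which factors through a zero object, so `e = 0`
    exfalso
    obtain ⟨Z, hZ⟩ := Limits.HasZeroObject.zero (C := T)
    have h0 : S.preimage e = (0 : X ⟶ Z) ≫ (0 : Z ⟶ X) := by
      rw [hc, hc0, zero_smul, Limits.zero_comp]
    have he2 : e = S.map (0 : X ⟶ Z) ≫ S.map (0 : Z ⟶ X) := by
      rw [← S.map_comp, ← h0, he]
    have hSZ : Limits.IsZero (S.obj Z) := isZero_obj_of_isZero_aux S hZ
    have : S.map (0 : Z ⟶ X) = 0 := hSZ.eq_zero_of_src _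
    rw [this, Limits.comp_zero] at he2
    exact hgw he2
  · -- then `S.preimage e` is an isomorphism, hence so is `e`, giving a retraction of `g`
    have : IsIso (S.preimage e) := by
      rw [hc]
      exact ⟨⟨c⁻¹ • 𝟙 X, by simp [Linear.smul_comp, Linear.comp_smul, smul_smul, hc0],
        by simp [Linear.smul_comp, Linear.comp_smul, smul_smul, hc0]⟩⟩
    have hieso : IsIso e := by rw [← he]; infer_instance
    exact hg ⟨⟨⟨w ≫ inv e, by rw [← Category.assoc, ← he_def, IsIso.hom_inv_id]⟩⟩⟩
end
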